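/- arXiv:1906.07019 — 5 statements merged into one kernel-verified Lean document; each statement's English description precedes it below -/
import Mathlib

section
/- Let X be a real Banach space and g : [0,1] → X strongly measurable. Then F_g : [0,1] → ℓ∞(B_{X*}), F_g(t)(x*) = max (x*(g(t))) 0, is Bochner integrable with respect to Lebesgue measure on [0,1] if and only if g is Bochner integrable. (This is Proposition: the multifunction G(t) = conv{0,g(t)} determined by a strongly measurable g is Bochner integrable iff g is, read through the isometric Rådström embedding of ck(X) into ℓ∞(B_{X*}).) -/
open MeasureTheory
open scoped ENNReal

noncomputable def Fg {X : Type*} [NormedAddCommGroup X] [NormedSpace ℝ X]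
    (g : ℝ → X) (t : ℝ) : lp (fun _ : Metric.closedBall (0 : X →L[ℝ] ℝ) 1 => ℝ) ∞ :=
  ⟨fun p => max ((p : X →L[ℝ] ℝ) (g t)) 0, by
    apply memℓp_infty
    refine ⟨‖g t‖, ?_⟩
    rintro r ⟨p, rfl⟩
    have hp : ‖(p : X →L[ℝ] ℝ)‖ ≤ 1 := mem_closedBall_zero_iff.mp p.2
    have h1 : |(p : X →L[ℝ] ℝ) (g t)| ≤ ‖g t‖ := by
      calc |(p : X →L[ℝ] ℝ) (g t)| = ‖(p : X →L[ℝ] ℝ) (g t)‖ := rfl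
        _ ≤ ‖(p : X →L[ℝ] ℝ)‖ * ‖g t‖ := (p : X →L[ℝ] ℝ).le_opNorm _
        _ ≤ 1 * ‖g t‖ := by gcongr
        _ = ‖g t‖ := one_mul _
    simp only [Real.norm_eq_abs]
    rcases le_total ((p : X →L[ℝ] ℝ) (g t)) 0 with h | h
    · rw [max_eq_right h]; simp [norm_nonneg]
    · rw [max_eq_left h, abs_of_nonneg h]
      exact (le_abs_self _).trans h1⟩

section aux
variable {X : Type*} [NormedAddCommGroup X] [NormedSpace ℝ X]

lemma Fg_norm_eq (g : ℝ → X) (t : ℝ) : ‖Fg g t‖ = ‖g t‖ := by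
  apply le_antisymm
  · apply lp.norm_le_of_forall_le (norm_nonneg _)
    intro p
    have hp : ‖(p : X →L[ℝ] ℝ)‖ ≤ 1 := mem_closedBall_zero_iff.mp p.2
    have h1 : |(p : X →L[ℝ] ℝ) (g t)| ≤ ‖g t‖ := by
      calc |(p : X →L[ℝ] ℝ) (g t)| ≤ ‖(p : X →L[ℝ] ℝ)‖ * ‖g t‖ := (p : X →L[ℝ] ℝ).le_opNorm _
        _ ≤ 1 * ‖g t‖ := by gcongr
        _ = ‖g t‖ := one_mul _
    show ‖max ((p : X →L[ℝ] ℝ) (g t)) 0‖ ≤ ‖g t‖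
    rw [Real.norm_eq_abs]
    rcases le_total ((p : X →L[ℝ] ℝ) (g t)) 0 with h | h
    · rw [max_eq_right h]; simp
    · rw [max_eq_left h, abs_of_nonneg h]; exact (le_abs_self _).trans h1
  · rcases eq_or_ne (g t) 0 with h | h
    · rw [h, norm_zero]; exact norm_nonneg _
    · obtain ⟨f, hf1, hfx⟩ := exists_dual_vector ℝ (g t) (norm_ne_zero_iff.mpr h)
      have hmem : f ∈ Metric.closedBall (0 : X →L[ℝ] ℝ) 1 :=
        mem_closedBall_zero_iff.mpr hf1.le
      have := lp.norm_apply_le_norm ENNReal.top_ne_zero (Fg g t) ⟨f, hmem⟩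
      have hval : (Fg g t) ⟨f, hmem⟩ = ‖g t‖ := by
        show max (f (g t)) 0 = ‖g t‖
        rw [hfx]
        exact_mod_cast max_eq_left (norm_nonneg (g t))
      rw [hval] at this
      rwa [Real.norm_eq_abs, abs_of_nonneg (norm_nonneg _)] at this

lemma FgLip : LipschitzWith 1 (fun x : X => Fg (fun _ : ℝ => x) 0) := by
  apply LipschitzWith.of_dist_le_mul
  intro x y
  rw [NNReal.coe_one, one_mul, dist_eq_norm, dist_eq_norm]
  apply lp.norm_le_of_forall_le (norm_nonneg _)
  intro p
  have hp : ‖(p : X →L[ℝ] ℝ)‖ ≤ 1 := mem_closedBall_zero_iff.mp p.2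
  show ‖max ((p : X →L[ℝ] ℝ) x) 0 - max ((p : X →L[ℝ] ℝ) y) 0‖ ≤ ‖x - y‖
  have h1 : |max ((p : X →L[ℝ] ℝ) x) 0 - max ((p : X →L[ℝ] ℝ) y) 0| ≤
      |(p : X →L[ℝ] ℝ) x - (p : X →L[ℝ] ℝ) y| := abs_max_sub_max_le_abs _ _ _
  rw [Real.norm_eq_abs]
  refine h1.trans ?_
  rw [← map_sub]
  calc |(p : X →L[ℝ] ℝ) (x - y)| ≤ ‖(p : X →L[ℝ] ℝ)‖ * ‖x - y‖ := (p : X →L[ℝ] ℝ).le_opNorm _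
    _ ≤ 1 * ‖x - y‖ := by gcongr
    _ = ‖x - y‖ := one_mul _

end aux

/-- The determined multifunction `G(t) = conv{0, g(t)}` (read through the isometric Rådström
embedding as `F_g : [0,1] → ℓ∞(B_{X*})`) is Bochner integrable w.r.t. Lebesgue measure on
`[0,1]` if and only if `g` is Bochner integrable. -/
theorem integrable_Fg_iff {X : Type*} [NormedAddCommGroup X] [NormedSpace ℝ X]
    [CompleteSpace X] (g : ℝ → X)
    (hg : AEStronglyMeasurable g (volume.restrict (Set.Icc (0 : ℝ) 1))) :
    Integrable (Fg g) (volume.restrict (Set.Icc (0 : ℝ) 1)) ↔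
      Integrable g (volume.restrict (Set.Icc (0 : ℝ) 1)) := by
  have hcomp : Fg g = (fun x : X => Fg (fun _ : ℝ => x) 0) ∘ g := rfl
  have hFm : AEStronglyMeasurable (Fg g) (volume.restrict (Set.Icc (0 : ℝ) 1)) := by
    rw [hcomp]
    exact FgLip.continuous.comp_aestronglyMeasurable hg
  constructor
  · intro h
    refine Integrable.mono' h.norm hg ?_
    filter_upwards with t
    exact (Fg_norm_eq g t).ge
  · intro h
    refine Integrable.mono' h.norm hFm ?_
    filter_upwards with t
    exact (Fg_norm_eq g t).le
end

section
/- Let X be a real Banach space, let g : [0,1] → X be McShane integrable on [0,1], and let α : [0,1] → ℝ be bounded and (Lebesgue) measurable. Then the function t ↦ α(t) • g(t) is McShane integrable on [0,1]. -/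
open MeasureTheory BoxIntegral

open MeasureTheory BoxIntegral Metric Set
open scoped Classical NNReal ENNReal
noncomputable section
namespace McShaneAux
set_option linter.unusedSectionVars false

variable {ι : Type} [Fintype ι] {X : Type*} [NormedAddCommGroup X] [NormedSpace ℝ X]
  [CompleteSpace X]
variable {I : Box ι} {g : (ι → ℝ) → X}

theorem memBaseSet_mcShane {c : ℝ≥0} {r : (ι → ℝ) → Set.Ioi (0:ℝ)} {π : TaggedPrepartition I}
    (h : π.IsSubordinate r) : IntegrationParams.McShane.MemBaseSet I c r π :=
  ⟨h, fun h' => absurd h' (by decide), fun h' => absurd h' (by decide),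
    fun h' => absurd h' (by decide)⟩

theorem integralSum_eq (f : (ι → ℝ) → X) (π : TaggedPrepartition I) :
    integralSum f (volume : Measure (ι → ℝ)).toBoxAdditive.toSMul π
      = ∑ J ∈ π.boxes, (volume (J : Set (ι → ℝ))).toReal • f (π.tag J) := by
  refine Finset.sum_congr rfl fun J _ => ?_
  rw [BoxAdditiveMap.toSMul_apply, Measure.toBoxAdditive_apply]; rfl

/-- Key a priori bound: sums of integrals of `g` over sub-prepartitions are controlled by
`ε` plus a fixed multiple of the covered volume. -/
theorem exists_norm_sum_integral_le
    (hg : BoxIntegral.Integrable I IntegrationParams.McShane g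
      (volume : Measure (ι → ℝ)).toBoxAdditive.toSMul)
    {ε : ℝ} (hε : 0 < ε) :
    ∃ N : ℝ, 0 ≤ N ∧ ∀ π₀ : Prepartition I,
      ‖∑ J ∈ π₀.boxes, BoxIntegral.integral J IntegrationParams.McShane g
          (volume : Measure (ι → ℝ)).toBoxAdditive.toSMul‖
        ≤ ε + N * (volume π₀.iUnion).toReal := by
  set r := hg.convergenceR ε 0 with hr
  -- a compactness argument producing "good tags" with `‖g‖ ≤ N`
  set P : ℕ → Set (ι → ℝ) := fun n => ⋃ t ∈ {t | t ∈ Box.Icc I ∧ ‖g t‖ ≤ n}, ball t (r t)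
    with hP
  have hPopen : ∀ n, IsOpen (P n) := fun n => isOpen_biUnion fun t _ => isOpen_ball
  have hcover : Box.Icc I ⊆ ⋃ n, P n := by
    intro x hx
    refine mem_iUnion.2 ⟨⌈‖g x‖⌉₊, ?_⟩
    exact mem_biUnion ⟨hx, Nat.le_ceil _⟩ (mem_ball_self (r x).2)
  obtain ⟨fin, hfin⟩ := I.isCompact_Icc.elim_finite_subcover P hPopen hcover
  set N : ℕ := fin.sup id with hN
  have hPmono : ∀ n ∈ fin, P n ⊆ P N := by
    intro n hn x hx
    rcases mem_iUnion₂.1 hx with ⟨t, ⟨ht1, ht2⟩, ht3⟩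
    exact mem_biUnion ⟨ht1, le_trans ht2 (by exact_mod_cast Finset.le_sup (f := id) hn)⟩ ht3
  have hIccP : Box.Icc I ⊆ P N := fun x hx => by
    rcases mem_iUnion₂.1 (hfin hx) with ⟨n, hn, hxn⟩
    exact hPmono n hn hxn
  have hgood : ∀ x, x ∈ Box.Icc I →
      ∃ t, (t ∈ Box.Icc I ∧ ‖g t‖ ≤ N) ∧ x ∈ ball t (r t) := by
    intro x hx
    rcases mem_iUnion₂.1 (hIccP hx) with ⟨t, ht, hxt⟩
    exact ⟨t, ht, hxt⟩
  choose! θ hθ hθball using hgood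
  -- shrink radii so that retagging by `θ` stays subordinate to `r`
  have hρ : ∀ x : ι → ℝ, ∃ ρ : Set.Ioi (0:ℝ), x ∈ Box.Icc I →
      closedBall x ρ ⊆ closedBall (θ x) (r (θ x)) := by
    intro x
    by_cases hx : x ∈ Box.Icc I
    · have hd : dist x (θ x) < r (θ x) := mem_ball.1 (hθball x hx)
      refine ⟨⟨(r (θ x) - dist x (θ x)) / 2, ?_⟩, fun _ => ?_⟩
      · exact mem_Ioi.2 (by linarith)
      · refine closedBall_subset_closedBall' ?_
        have := dist_nonneg (x := x) (y := θ x)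
        simp only []
        linarith
    · exact ⟨⟨1, by norm_num⟩, fun h => absurd h hx⟩
  choose ρ hρ using hρ
  refine ⟨N, Nat.cast_nonneg _, fun π₀ => ?_⟩
  set T₀ := π₀.toSubordinate ρ with hT₀
  set T : TaggedPrepartition I :=
    ⟨T₀.toPrepartition, fun J => θ (T₀.tag J), fun J => (hθ _ (T₀.tag_mem_Icc J)).1⟩ with hT
  have hTsub : T.IsSubordinate r := by
    intro J hJ
    have h1 : Box.Icc J ⊆ closedBall (T₀.tag J) (ρ (T₀.tag J)) :=
      (π₀.isSubordinate_toSubordinate ρ) J hJ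
    exact h1.trans (hρ _ (T₀.tag_mem_Icc J))
  have hSH := hg.dist_integralSum_sum_integral_le_of_memBaseSet hε (memBaseSet_mcShane hTsub)
  have hUnion : T.toPrepartition.iUnion = π₀.iUnion := π₀.iUnion_toSubordinate ρ
  have hcongr : ∑ J ∈ T.boxes, BoxIntegral.integral J IntegrationParams.McShane g
        (volume : Measure (ι → ℝ)).toBoxAdditive.toSMul
      = ∑ J ∈ π₀.boxes, BoxIntegral.integral J IntegrationParams.McShane g
        (volume : Measure (ι → ℝ)).toBoxAdditive.toSMul := by
    exact hg.sum_integral_congr hUnion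
  have hvol : ∑ J ∈ T.boxes, (volume (J : Set (ι → ℝ))).toReal
      = (volume π₀.iUnion).toReal := by
    rw [← hUnion]; exact (Prepartition.measure_iUnion_toReal ..).symm
  have hnorm : ‖integralSum g (volume : Measure (ι → ℝ)).toBoxAdditive.toSMul T‖
      ≤ N * (volume π₀.iUnion).toReal := by
    rw [integralSum_eq, ← hvol, Finset.mul_sum]
    refine (norm_sum_le _ _).trans (Finset.sum_le_sum fun J hJ => ?_)
    rw [norm_smul, Real.norm_eq_abs, abs_of_nonneg ENNReal.toReal_nonneg]
    calc (volume (J : Set (ι → ℝ))).toReal * ‖g (T.tag J)‖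
        ≤ (volume (J : Set (ι → ℝ))).toReal * N :=
          mul_le_mul_of_nonneg_left ((hθ _ (T₀.tag_mem_Icc J)).2) ENNReal.toReal_nonneg
      _ = (N : ℝ) * (volume (J : Set (ι → ℝ))).toReal := mul_comm _ _
  calc ‖∑ J ∈ π₀.boxes, BoxIntegral.integral J IntegrationParams.McShane g
          (volume : Measure (ι → ℝ)).toBoxAdditive.toSMul‖
      ≤ ‖integralSum g (volume : Measure (ι → ℝ)).toBoxAdditive.toSMul T‖
        + dist (integralSum g (volume : Measure (ι → ℝ)).toBoxAdditive.toSMul T)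
            (∑ J ∈ T.boxes, BoxIntegral.integral J IntegrationParams.McShane g
              (volume : Measure (ι → ℝ)).toBoxAdditive.toSMul) := by
        rw [← hcongr, dist_eq_norm, norm_sub_rev]
        exact norm_le_insert' _ _
    _ ≤ N * (volume π₀.iUnion).toReal + ε := add_le_add hnorm hSH
    _ = ε + N * (volume π₀.iUnion).toReal := by ring

/-- Saks–Henstock for sub-prepartitions of a subordinate tagged prepartition. -/
theorem norm_sum_sub_integral_le
    (hg : BoxIntegral.Integrable I IntegrationParams.McShane g
      (volume : Measure (ι → ℝ)).toBoxAdditive.toSMul)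
    {ε : ℝ} (hε : 0 < ε) {c : ℝ≥0} {π : TaggedPrepartition I}
    (hπ : π.IsSubordinate (hg.convergenceR ε c)) (p : Box ι → Prop) :
    ‖∑ J ∈ π.boxes.filter p, ((volume (J : Set (ι → ℝ))).toReal • g (π.tag J)
        - BoxIntegral.integral J IntegrationParams.McShane g
            (volume : Measure (ι → ℝ)).toBoxAdditive.toSMul)‖ ≤ ε := by
  have h1 := hg.dist_integralSum_sum_integral_le_of_memBaseSet hε
    ((memBaseSet_mcShane hπ).filter p)
  rw [dist_eq_norm, integralSum_eq, ← Finset.sum_sub_distrib] at h1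
  exact h1


/-- If every subset-sum of the `x i` has norm at most `A`, then any combination with
coefficients bounded by `B` has norm at most `2 * B * A`. -/
theorem norm_sum_smul_le_of_subsets {α : Type*} (s : Finset α) (x : α → X) (β : α → ℝ)
    {B A : ℝ} (hB0 : 0 ≤ B) (hB : ∀ i ∈ s, |β i| ≤ B)
    (hA : ∀ t ⊆ s, ‖∑ i ∈ t, x i‖ ≤ A) :
    ‖∑ i ∈ s, β i • x i‖ ≤ 2 * B * A := by
  have hA0 : 0 ≤ A := le_trans (by simp) (hA ∅ (Finset.empty_subset s))
  by_cases hv : (∑ i ∈ s, β i • x i) = 0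
  · rw [hv, norm_zero]; positivity
  · have : Nontrivial X := ⟨⟨_, 0, hv⟩⟩
    obtain ⟨φ, hφ1, hφv⟩ := exists_dual_vector ℝ (∑ i ∈ s, β i • x i) (norm_ne_zero_iff.2 hv)
    have hkey : ∀ (t : Finset α), t ⊆ s → ∀ (sgn : ℝ), |sgn| ≤ 1 →
        sgn * φ (∑ i ∈ t, x i) ≤ A := by
      intro t ht sgn hsgn
      calc sgn * φ (∑ i ∈ t, x i) ≤ |sgn * φ (∑ i ∈ t, x i)| := le_abs_self _
        _ ≤ 1 * ‖φ (∑ i ∈ t, x i)‖ := by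
            rw [abs_mul]
            exact mul_le_mul hsgn le_rfl (abs_nonneg _) zero_le_one
        _ ≤ ‖∑ i ∈ t, x i‖ := by
            rw [one_mul]
            calc ‖φ (∑ i ∈ t, x i)‖ ≤ ‖φ‖ * ‖∑ i ∈ t, x i‖ := φ.le_opNorm _
              _ = ‖∑ i ∈ t, x i‖ := by rw [hφ1, one_mul]
        _ ≤ A := hA t ht
    have hφv' : φ (∑ i ∈ s, β i • x i) = ‖∑ i ∈ s, β i • x i‖ := by exact_mod_cast hφv
    have h1 : ‖∑ i ∈ s, β i • x i‖ = ∑ i ∈ s, β i * φ (x i) := by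
      rw [← hφv', map_sum]
      exact Finset.sum_congr rfl fun i _ => by simp
    rw [h1]
    set t₁ := s.filter fun i => 0 ≤ φ (x i) with ht₁
    have hsplit : ∑ i ∈ s, β i * φ (x i) ≤ B * ∑ i ∈ s, |φ (x i)| := by
      rw [Finset.mul_sum]
      refine Finset.sum_le_sum fun i hi => ?_
      calc β i * φ (x i) ≤ |β i * φ (x i)| := le_abs_self _
        _ = |β i| * |φ (x i)| := abs_mul _ _
        _ ≤ B * |φ (x i)| := by
            exact mul_le_mul_of_nonneg_right (hB i hi) (abs_nonneg _)
    have habs : ∑ i ∈ s, |φ (x i)| ≤ 2 * A := by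
      rw [← Finset.sum_filter_add_sum_filter_not s (fun i => 0 ≤ φ (x i))]
      have e1 : ∑ i ∈ s.filter (fun i => 0 ≤ φ (x i)), |φ (x i)|
          = φ (∑ i ∈ s.filter (fun i => 0 ≤ φ (x i)), x i) := by
        rw [map_sum]
        exact Finset.sum_congr rfl fun i hi => abs_of_nonneg (Finset.mem_filter.1 hi).2
      have e2 : ∑ i ∈ s.filter (fun i => ¬ 0 ≤ φ (x i)), |φ (x i)|
          = - φ (∑ i ∈ s.filter (fun i => ¬ 0 ≤ φ (x i)), x i) := by
        rw [map_sum, ← Finset.sum_neg_distrib]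
        exact Finset.sum_congr rfl fun i hi =>
          abs_of_neg (lt_of_not_ge (Finset.mem_filter.1 hi).2)
      rw [e1, e2, two_mul]
      exact add_le_add
        (by simpa using hkey _ (Finset.filter_subset _ s) 1 (by norm_num))
        (by simpa using hkey _ (Finset.filter_subset _ s) (-1) (by norm_num))
    calc ∑ i ∈ s, β i * φ (x i) ≤ B * ∑ i ∈ s, |φ (x i)| := hsplit
      _ ≤ B * (2 * A) := mul_le_mul_of_nonneg_left habs hB0
      _ = 2 * B * A := by ring

theorem sum_integral_split
    (hg : BoxIntegral.Integrable I IntegrationParams.McShane g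
      (volume : Measure (ι → ℝ)).toBoxAdditive.toSMul)
    (π₁ π₂ : Prepartition I) :
    ∑ J ∈ π₁.boxes, BoxIntegral.integral J IntegrationParams.McShane g
        (volume : Measure (ι → ℝ)).toBoxAdditive.toSMul
      = (∑ J ∈ (π₁ ⊓ π₂).boxes, BoxIntegral.integral J IntegrationParams.McShane g
          (volume : Measure (ι → ℝ)).toBoxAdditive.toSMul)
        + ∑ J ∈ (π₁ ⊓ π₂.compl).boxes, BoxIntegral.integral J IntegrationParams.McShane g
          (volume : Measure (ι → ℝ)).toBoxAdditive.toSMul := by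
  have hd : Disjoint (π₁ ⊓ π₂).iUnion (π₁ ⊓ π₂.compl).iUnion := by
    rw [Prepartition.iUnion_inf, Prepartition.iUnion_inf, Prepartition.iUnion_compl]
    exact Disjoint.mono inter_subset_right inter_subset_right disjoint_sdiff_self_right
  have hDU : ((π₁ ⊓ π₂).disjUnion (π₁ ⊓ π₂.compl) hd).iUnion = π₁.iUnion := by
    rw [Prepartition.iUnion_disjUnion, Prepartition.iUnion_inf, Prepartition.iUnion_inf,
      Prepartition.iUnion_compl, ← inter_union_distrib_left,
      union_diff_cancel π₂.iUnion_subset, inter_eq_left]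
    exact π₁.iUnion_subset
  have hcongr := hg.sum_integral_congr hDU.symm
  rw [hcongr]
  have hboxes : ((π₁ ⊓ π₂).disjUnion (π₁ ⊓ π₂.compl) hd).boxes
      = (π₁ ⊓ π₂).boxes ∪ (π₁ ⊓ π₂.compl).boxes := rfl
  rw [hboxes, Finset.sum_union]
  refine Finset.disjoint_left.2 fun J hJ1 hJ2 => ?_
  have h1 : (J : Set (ι → ℝ)) ⊆ (π₁ ⊓ π₂).iUnion := Prepartition.subset_iUnion _ hJ1
  have h2 : (J : Set (ι → ℝ)) ⊆ (π₁ ⊓ π₂.compl).iUnion := Prepartition.subset_iUnion _ hJ2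
  obtain ⟨x, hx⟩ := J.nonempty_coe
  exact absurd (mem_inter (h1 hx) (h2 hx)) (by rw [hd.inter_eq]; exact notMem_empty x)

theorem sum_integral_sub_eq
    (hg : BoxIntegral.Integrable I IntegrationParams.McShane g
      (volume : Measure (ι → ℝ)).toBoxAdditive.toSMul)
    (π₁ π₂ : Prepartition I) :
    (∑ J ∈ π₁.boxes, BoxIntegral.integral J IntegrationParams.McShane g
        (volume : Measure (ι → ℝ)).toBoxAdditive.toSMul)
      - ∑ J ∈ π₂.boxes, BoxIntegral.integral J IntegrationParams.McShane g
          (volume : Measure (ι → ℝ)).toBoxAdditive.toSMul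
      = (∑ J ∈ (π₁ ⊓ π₂.compl).boxes, BoxIntegral.integral J IntegrationParams.McShane g
          (volume : Measure (ι → ℝ)).toBoxAdditive.toSMul)
        - ∑ J ∈ (π₂ ⊓ π₁.compl).boxes, BoxIntegral.integral J IntegrationParams.McShane g
          (volume : Measure (ι → ℝ)).toBoxAdditive.toSMul := by
  rw [sum_integral_split hg π₁ π₂, sum_integral_split hg π₂ π₁]
  have hcomm : ∑ J ∈ (π₁ ⊓ π₂).boxes, BoxIntegral.integral J IntegrationParams.McShane g
        (volume : Measure (ι → ℝ)).toBoxAdditive.toSMul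
      = ∑ J ∈ (π₂ ⊓ π₁).boxes, BoxIntegral.integral J IntegrationParams.McShane g
        (volume : Measure (ι → ℝ)).toBoxAdditive.toSMul := by
    refine hg.sum_integral_congr ?_
    rw [Prepartition.iUnion_inf, Prepartition.iUnion_inf, inter_comm]
  rw [hcomm]
  abel


theorem integrable_indicator_mcShane
    (hg : BoxIntegral.Integrable I IntegrationParams.McShane g
      (volume : Measure (ι → ℝ)).toBoxAdditive.toSMul)
    {E : Set (ι → ℝ)} (hE : MeasurableSet E) :
    BoxIntegral.Integrable I IntegrationParams.McShane (E.indicator g)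
      (volume : Measure (ι → ℝ)).toBoxAdditive.toSMul := by
  rw [BoxIntegral.integrable_iff_cauchy_basis]
  intro ε hε
  set ε₁ := ε / 6 with hε₁def
  have hε₁0 : 0 < ε₁ := by positivity
  obtain ⟨N, hN0, hNb⟩ := exists_norm_sum_integral_le hg hε₁0
  set η : ℝ := ε₁ / (N + 1) with hηdef
  have hη0 : 0 < η := by positivity
  have hηε : η * (N + 1) = ε₁ := by rw [hηdef]; field_simp
  have hμ1 : volume (E ∩ Box.Icc I) ≠ ∞ :=
    ((measure_mono inter_subset_right).trans_lt (I.measure_Icc_lt_top volume)).ne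
  have hμ2 : volume (Box.Icc I \ E) ≠ ∞ :=
    ((measure_mono diff_subset).trans_lt (I.measure_Icc_lt_top volume)).ne
  have hη2 : (ENNReal.ofReal (η / 2)) ≠ 0 := by
    rw [Ne, ENNReal.ofReal_eq_zero, not_le]
    linarith
  obtain ⟨U, hUs, hUo, _, hUd⟩ := (hE.inter I.measurableSet_Icc).exists_isOpen_diff_lt hμ1 hη2
  obtain ⟨V, hVs, hVo, _, hVd⟩ := (I.measurableSet_Icc.diff hE).exists_isOpen_diff_lt hμ2 hη2
  have hr₂ex : ∀ x : ι → ℝ, ∃ ρ : Set.Ioi (0:ℝ), x ∈ Box.Icc I →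
      closedBall x ρ ⊆ (if x ∈ E then U else V) := by
    intro x
    by_cases hx : x ∈ Box.Icc I
    · by_cases hxE : x ∈ E
      · obtain ⟨δ, hδ0, hδ⟩ := Metric.isOpen_iff.1 hUo x (hUs ⟨hxE, hx⟩)
        exact ⟨⟨δ/2, mem_Ioi.2 (by linarith)⟩, fun _ => by
          rw [if_pos hxE]
          exact (closedBall_subset_ball (by linarith)).trans hδ⟩
      · obtain ⟨δ, hδ0, hδ⟩ := Metric.isOpen_iff.1 hVo x (hVs ⟨hx, hxE⟩)
        exact ⟨⟨δ/2, mem_Ioi.2 (by linarith)⟩, fun _ => by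
          rw [if_neg hxE]
          exact (closedBall_subset_ball (by linarith)).trans hδ⟩
    · exact ⟨⟨1, mem_Ioi.2 one_pos⟩, fun h => absurd h hx⟩
  choose r₂ hr₂ using hr₂ex
  refine ⟨fun c x => ⟨min (hg.convergenceR ε₁ c x) (r₂ x),
      mem_Ioi.2 (lt_min (mem_Ioi.1 (hg.convergenceR ε₁ c x).2) (mem_Ioi.1 (r₂ x).2))⟩,
    fun c => IntegrationParams.rCond_of_bRiemann_eq_false _ rfl, ?_⟩
  intro c₁ c₂ π₁ π₂ h₁ hp₁ h₂ hp₂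
  have hsubC₁ : π₁.IsSubordinate (hg.convergenceR ε₁ c₁) :=
    h₁.1.mono' fun J _ => Subtype.coe_le_coe.1 (min_le_left _ _)
  have hsubC₂ : π₂.IsSubordinate (hg.convergenceR ε₁ c₂) :=
    h₂.1.mono' fun J _ => Subtype.coe_le_coe.1 (min_le_left _ _)
  have hsubR₁ : π₁.IsSubordinate r₂ :=
    h₁.1.mono' fun J _ => Subtype.coe_le_coe.1 (min_le_right _ _)
  have hsubR₂ : π₂.IsSubordinate r₂ :=
    h₂.1.mono' fun J _ => Subtype.coe_le_coe.1 (min_le_right _ _)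
  -- the filtered prepartitions with tags in `E`
  set A₁ := π₁.toPrepartition.filter (fun J => π₁.tag J ∈ E) with hA₁def
  set A₂ := π₂.toPrepartition.filter (fun J => π₂.tag J ∈ E) with hA₂def
  -- their unions are close to `E` in measure
  have keyU : ∀ (π : TaggedPrepartition I), π.IsSubordinate r₂ →
      (π.toPrepartition.filter (fun J => π.tag J ∈ E)).iUnion ⊆ U := by
    intro π hs x hx
    rcases (Prepartition.mem_iUnion _).1 hx with ⟨J, hJ, hxJ⟩
    rcases (Prepartition.mem_filter _).1 hJ with ⟨hJπ, htag⟩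
    have h3 := hr₂ (π.tag J) (π.tag_mem_Icc J)
    rw [if_pos htag] at h3
    exact h3 (hs J hJπ (Box.coe_subset_Icc hxJ))
  have keyV : ∀ (π : TaggedPrepartition I), π.IsSubordinate r₂ → π.IsPartition →
      ↑I \ (π.toPrepartition.filter (fun J => π.tag J ∈ E)).iUnion ⊆ V := by
    intro π hs hp x hx
    obtain ⟨hxI, hxA⟩ := hx
    have hxu : x ∈ π.iUnion := by
      rw [(TaggedPrepartition.isPartition_iff_iUnion_eq _).1 hp]; exact hxI
    rcases (TaggedPrepartition.mem_iUnion _).1 hxu with ⟨J, hJ, hxJ⟩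
    have htag : π.tag J ∉ E := fun hmem =>
      hxA ((Prepartition.mem_iUnion _).2 ⟨J, (Prepartition.mem_filter _).2 ⟨hJ, hmem⟩, hxJ⟩)
    have h3 := hr₂ (π.tag J) (π.tag_mem_Icc J)
    rw [if_neg htag] at h3
    exact h3 (hs J hJ (Box.coe_subset_Icc hxJ))
  have hvolkey : ∀ (π π' : TaggedPrepartition I), π.IsSubordinate r₂ → π'.IsSubordinate r₂ →
      π'.IsPartition →
      (volume (((π.toPrepartition.filter fun J => π.tag J ∈ E) ⊓
        (π'.toPrepartition.filter fun J => π'.tag J ∈ E).compl).iUnion)).toReal ≤ η := by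
    intro π π' hs hs' hp'
    have hW : ((π.toPrepartition.filter fun J => π.tag J ∈ E) ⊓
        (π'.toPrepartition.filter fun J => π'.tag J ∈ E).compl).iUnion
        ⊆ (U \ (E ∩ Box.Icc I)) ∪ (V \ (Box.Icc I \ E)) := by
      rw [Prepartition.iUnion_inf, Prepartition.iUnion_compl]
      rintro x ⟨hxA, hxI, hxB⟩
      have hxU : x ∈ U := keyU π hs hxA
      have hxV : x ∈ V := keyV π' hs' hp' ⟨hxI, hxB⟩
      by_cases hxE : x ∈ E
      · exact Or.inr ⟨hxV, fun hc => hc.2 hxE⟩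
      · exact Or.inl ⟨hxU, fun hc => hxE hc.1⟩
    have hm : volume (((π.toPrepartition.filter fun J => π.tag J ∈ E) ⊓
        (π'.toPrepartition.filter fun J => π'.tag J ∈ E).compl).iUnion)
        ≤ ENNReal.ofReal η :=
      calc volume _ ≤ volume ((U \ (E ∩ Box.Icc I)) ∪ (V \ (Box.Icc I \ E))) := measure_mono hW
        _ ≤ volume (U \ (E ∩ Box.Icc I)) + volume (V \ (Box.Icc I \ E)) := measure_union_le _ _
        _ ≤ ENNReal.ofReal (η/2) + ENNReal.ofReal (η/2) := add_le_add hUd.le hVd.le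
        _ = ENNReal.ofReal η := by
            rw [← ENNReal.ofReal_add (by linarith) (by linarith)]
            norm_num
    exact ENNReal.toReal_le_of_le_ofReal hη0.le hm
  have hΦsmall : ∀ π₀ : Prepartition I, (volume π₀.iUnion).toReal ≤ η →
      ‖∑ J ∈ π₀.boxes, BoxIntegral.integral J IntegrationParams.McShane g
        (volume : Measure (ι → ℝ)).toBoxAdditive.toSMul‖ ≤ 2 * ε₁ := by
    intro π₀ hvol
    refine (hNb π₀).trans ?_
    have h4 : N * (volume π₀.iUnion).toReal ≤ ε₁ := by
      calc N * (volume π₀.iUnion).toReal ≤ N * η := mul_le_mul_of_nonneg_left hvol hN0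
        _ ≤ ε₁ := by nlinarith
    linarith
  -- integral sums of the indicator are integral sums of `g` over the filtered prepartitions
  have hsum : ∀ (π : TaggedPrepartition I),
      integralSum (E.indicator g) (volume : Measure (ι → ℝ)).toBoxAdditive.toSMul π
        = ∑ J ∈ π.boxes.filter (fun J => π.tag J ∈ E),
            (volume (J : Set (ι → ℝ))).toReal • g (π.tag J) := by
    intro π
    rw [integralSum_eq, ← Finset.sum_filter_add_sum_filter_not π.boxes (fun J => π.tag J ∈ E)]
    have h0 : ∑ J ∈ π.boxes.filter (fun J => ¬ π.tag J ∈ E),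
        (volume (J:Set (ι→ℝ))).toReal • (E.indicator g) (π.tag J) = 0 :=
      Finset.sum_eq_zero fun J hJ => by
        rw [indicator_of_notMem (Finset.mem_filter.1 hJ).2, smul_zero]
    rw [h0, add_zero]
    exact Finset.sum_congr rfl fun J hJ => by
      rw [indicator_of_mem (Finset.mem_filter.1 hJ).2]
  have hSH : ∀ (c : ℝ≥0) (π : TaggedPrepartition I), π.IsSubordinate (hg.convergenceR ε₁ c) →
      ‖integralSum (E.indicator g) (volume : Measure (ι → ℝ)).toBoxAdditive.toSMul π
        - ∑ J ∈ (π.toPrepartition.filter fun J => π.tag J ∈ E).boxes,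
            BoxIntegral.integral J IntegrationParams.McShane g
              (volume : Measure (ι → ℝ)).toBoxAdditive.toSMul‖ ≤ ε₁ := by
    intro c π hs
    have h5 := norm_sum_sub_integral_le hg hε₁0 hs (fun J => π.tag J ∈ E)
    rw [Finset.sum_sub_distrib] at h5
    rw [hsum π]
    exact h5
  -- assembling
  rw [dist_eq_norm]
  set S₁ := integralSum (E.indicator g) (volume : Measure (ι → ℝ)).toBoxAdditive.toSMul π₁
  set S₂ := integralSum (E.indicator g) (volume : Measure (ι → ℝ)).toBoxAdditive.toSMul π₂
  set Φ : Prepartition I → X := fun π₀ => ∑ J ∈ π₀.boxes,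
    BoxIntegral.integral J IntegrationParams.McShane g
      (volume : Measure (ι → ℝ)).toBoxAdditive.toSMul with hΦdef
  have e : S₁ - S₂ = (S₁ - Φ A₁) + (Φ A₁ - Φ A₂) + (Φ A₂ - S₂) := by abel
  have hΦdiff : ‖Φ A₁ - Φ A₂‖ ≤ 4 * ε₁ := by
    have hd := sum_integral_sub_eq hg A₁ A₂
    have h6 : ‖Φ (A₁ ⊓ A₂.compl)‖ ≤ 2 * ε₁ :=
      hΦsmall _ (hvolkey π₁ π₂ hsubR₁ hsubR₂ hp₂)
    have h7 : ‖Φ (A₂ ⊓ A₁.compl)‖ ≤ 2 * ε₁ :=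
      hΦsmall _ (hvolkey π₂ π₁ hsubR₂ hsubR₁ hp₁)
    calc ‖Φ A₁ - Φ A₂‖ = ‖Φ (A₁ ⊓ A₂.compl) - Φ (A₂ ⊓ A₁.compl)‖ := by rw [hΦdef]; exact congrArg norm hd
      _ ≤ ‖Φ (A₁ ⊓ A₂.compl)‖ + ‖Φ (A₂ ⊓ A₁.compl)‖ := norm_sub_le _ _
      _ ≤ 4 * ε₁ := by linarith
  calc ‖S₁ - S₂‖ = ‖(S₁ - Φ A₁) + (Φ A₁ - Φ A₂) + (Φ A₂ - S₂)‖ := by rw [e]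
    _ ≤ ‖S₁ - Φ A₁‖ + ‖Φ A₁ - Φ A₂‖ + ‖Φ A₂ - S₂‖ := norm_add₃_le
    _ ≤ ε₁ + 4 * ε₁ + ε₁ := by
        refine add_le_add (add_le_add (hSH c₁ π₁ hsubC₁) hΦdiff) ?_
        rw [norm_sub_rev]
        exact hSH c₂ π₂ hsubC₂
    _ ≤ ε := by rw [hε₁def]; linarith


theorem exists_subset_sum_bound
    (hg : BoxIntegral.Integrable I IntegrationParams.McShane g
      (volume : Measure (ι → ℝ)).toBoxAdditive.toSMul) :
    ∃ A : ℝ, 0 ≤ A ∧ ∀ (c : ℝ≥0) (π : TaggedPrepartition I),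
      π.IsSubordinate (hg.convergenceR 1 c) → ∀ t ⊆ π.boxes,
      ‖∑ J ∈ t, (volume (J : Set (ι → ℝ))).toReal • g (π.tag J)‖ ≤ A := by
  obtain ⟨N, hN0, hNb⟩ := exists_norm_sum_integral_le hg one_pos
  refine ⟨1 + (1 + N * (volume (I : Set (ι → ℝ))).toReal), by positivity,
    fun c π hs t ht => ?_⟩
  have hfe : ∀ (h : DecidablePred fun J => J ∈ t),
      @Finset.filter _ (fun J => J ∈ t) h π.boxes = t := by
    intro h
    ext J
    rw [Finset.mem_filter]
    exact ⟨fun hh => hh.2, fun hh => ⟨ht hh, hh⟩⟩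
  have h1 := norm_sum_sub_integral_le hg one_pos hs (fun J => J ∈ t)
  rw [hfe _, Finset.sum_sub_distrib] at h1
  have h2 : ‖∑ J ∈ t, BoxIntegral.integral J IntegrationParams.McShane g
      (volume : Measure (ι → ℝ)).toBoxAdditive.toSMul‖
      ≤ 1 + N * (volume (I : Set (ι → ℝ))).toReal := by
    have h3 := hNb (π.toPrepartition.filter (fun J => J ∈ t))
    rw [show (π.toPrepartition.filter fun J => J ∈ t).boxes = t from hfe _] at h3
    refine h3.trans ?_
    have h4 : (volume ((π.toPrepartition.filter fun J => J ∈ t).iUnion)).toReal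
        ≤ (volume (I : Set (ι → ℝ))).toReal :=
      ENNReal.toReal_mono (I.measure_coe_lt_top volume).ne
        (measure_mono (Prepartition.iUnion_subset _))
    have := mul_le_mul_of_nonneg_left h4 hN0
    linarith
  have h5 := norm_le_insert' (∑ J ∈ t, (volume (J : Set (ι → ℝ))).toReal • g (π.tag J))
    (∑ J ∈ t, BoxIntegral.integral J IntegrationParams.McShane g
      (volume : Measure (ι → ℝ)).toBoxAdditive.toSMul)
  linarith

/-- The McShane multiplier theorem: a bounded measurable scalar multiple of a McShane
integrable function is McShane integrable. -/
theorem integrable_smul_mcShane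
    (hg : BoxIntegral.Integrable I IntegrationParams.McShane g
      (volume : Measure (ι → ℝ)).toBoxAdditive.toSMul)
    {β : (ι → ℝ) → ℝ} (hβm : Measurable β) {C : ℝ} (hβb : ∀ x ∈ Box.Icc I, |β x| ≤ C) :
    BoxIntegral.Integrable I IntegrationParams.McShane (fun x => β x • g x)
      (volume : Measure (ι → ℝ)).toBoxAdditive.toSMul := by
  obtain ⟨A, hA0, hAb⟩ := exists_subset_sum_bound hg
  rw [BoxIntegral.integrable_iff_cauchy_basis]
  intro ε hε
  set ε₂ := ε / (8 * (A + 1)) with hε₂def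
  have hε₂0 : 0 < ε₂ := by positivity
  have hε₂A : ε₂ * (A + 1) = ε / 8 := by
    rw [hε₂def]
    field_simp
  -- the simple approximation of `β` at scale `ε₂`
  set K : ℤ := ⌈C / ε₂⌉ + 1 with hKdef
  set s : ℤ → Set (ι → ℝ) := fun m => (fun x => ⌊β x / ε₂⌋) ⁻¹' {m} with hsdef
  have hsm : ∀ m, MeasurableSet (s m) := fun m =>
    (hβm.div_const ε₂).floor (measurableSet_singleton m)
  set sg : (ι → ℝ) → X := fun x => ∑ m ∈ Finset.Icc (-K) K,
    ((m : ℝ) * ε₂) • (s m).indicator g x with hsgdef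
  have hsg : BoxIntegral.Integrable I IntegrationParams.McShane sg
      (volume : Measure (ι → ℝ)).toBoxAdditive.toSMul := by
    have hterm : ∀ m ∈ Finset.Icc (-K) K,
        BoxIntegral.HasIntegral I IntegrationParams.McShane
          (fun x => ((m : ℝ) * ε₂) • (s m).indicator g x)
          (volume : Measure (ι → ℝ)).toBoxAdditive.toSMul
          (((m : ℝ) * ε₂) • (BoxIntegral.integral I IntegrationParams.McShane ((s m).indicator g)
            (volume : Measure (ι → ℝ)).toBoxAdditive.toSMul)) := fun m _ =>
      ((integrable_indicator_mcShane hg (hsm m)).hasIntegral).smul _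
    exact ⟨_, BoxIntegral.HasIntegral.sum hterm⟩
  have hsgx : ∀ x ∈ Box.Icc I, sg x = ((⌊β x / ε₂⌋ : ℝ) * ε₂) • g x := by
    intro x hx
    have hb := abs_le.1 (hβb x hx)
    have hmem : ⌊β x / ε₂⌋ ∈ Finset.Icc (-K) K := by
      rw [Finset.mem_Icc]
      have h1 : β x / ε₂ ≤ C / ε₂ := by gcongr; exact hb.2
      have h2 : -C / ε₂ ≤ β x / ε₂ := by gcongr; exact hb.1
      have h3 : (-⌈C / ε₂⌉ : ℤ) ≤ ⌊β x / ε₂⌋ := by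
        rw [← Int.floor_neg]
        refine Int.floor_le_floor ?_
        rw [← neg_div]
        exact h2
      have h4 : ⌊β x / ε₂⌋ ≤ ⌈C / ε₂⌉ :=
        le_trans (Int.floor_le_floor h1) (Int.floor_le_ceil _)
      constructor <;> [rw [hKdef]; rw [hKdef]] <;> linarith
    show (∑ m ∈ Finset.Icc (-K) K, ((m : ℝ) * ε₂) • (s m).indicator g x)
        = ((⌊β x / ε₂⌋ : ℝ) * ε₂) • g x
    rw [Finset.sum_eq_single (⌊β x / ε₂⌋) (fun m _ hne => by
        rw [Set.indicator_of_notMem (show x ∉ s m from fun hc => hne (Set.mem_singleton_iff.1 hc).symm), smul_zero])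
      (fun habs => absurd hmem habs),
      indicator_of_mem (show x ∈ s ⌊β x / ε₂⌋ from rfl)]
  have hcoef : ∀ x ∈ Box.Icc I, |β x - (⌊β x / ε₂⌋ : ℝ) * ε₂| ≤ ε₂ := by
    intro x hx
    have h1 : (⌊β x / ε₂⌋ : ℝ) ≤ β x / ε₂ := Int.floor_le _
    have h2 : β x / ε₂ < ⌊β x / ε₂⌋ + 1 := Int.lt_floor_add_one _
    have hbx : (β x / ε₂) * ε₂ = β x := div_mul_cancel₀ _ (ne_of_gt hε₂0)
    have h3 := mul_le_mul_of_nonneg_right h1 hε₂0.le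
    have h4 := mul_le_mul_of_nonneg_right h2.le hε₂0.le
    rw [hbx] at h3 h4
    rw [abs_le]
    constructor <;> nlinarith
  have hdiff : ∀ (c : ℝ≥0) (π : TaggedPrepartition I),
      π.IsSubordinate (hg.convergenceR 1 c) →
      ‖integralSum (fun x => β x • g x) (volume : Measure (ι → ℝ)).toBoxAdditive.toSMul π
        - integralSum sg (volume : Measure (ι → ℝ)).toBoxAdditive.toSMul π‖
        ≤ 2 * ε₂ * A := by
    intro c π hs
    rw [integralSum_eq, integralSum_eq, ← Finset.sum_sub_distrib]
    have heq : ∀ J ∈ π.boxes,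
        (volume (J : Set (ι → ℝ))).toReal • (β (π.tag J) • g (π.tag J))
          - (volume (J : Set (ι → ℝ))).toReal • sg (π.tag J)
        = (β (π.tag J) - (⌊β (π.tag J) / ε₂⌋ : ℝ) * ε₂) •
            ((volume (J : Set (ι → ℝ))).toReal • g (π.tag J)) := by
      intro J _
      rw [hsgx _ (π.tag_mem_Icc J), ← smul_sub, ← sub_smul, smul_comm]
    rw [Finset.sum_congr rfl heq]
    exact norm_sum_smul_le_of_subsets π.boxes _ _ hε₂0.le
      (fun J _ => hcoef _ (π.tag_mem_Icc J)) (fun t ht => hAb c π hs t ht)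
  have hε40 : (0:ℝ) < ε / 4 := by positivity
  refine ⟨fun c x => ⟨min (hg.convergenceR 1 c x) (hsg.convergenceR (ε/4) c x),
      mem_Ioi.2 (lt_min (mem_Ioi.1 (hg.convergenceR 1 c x).2)
        (mem_Ioi.1 (hsg.convergenceR (ε/4) c x).2))⟩,
    fun c => IntegrationParams.rCond_of_bRiemann_eq_false _ rfl, ?_⟩
  intro c₁ c₂ π₁ π₂ h₁ hp₁ h₂ hp₂
  have hsub1 : π₁.IsSubordinate (hg.convergenceR 1 c₁) :=
    h₁.1.mono' fun J _ => Subtype.coe_le_coe.1 (min_le_left _ _)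
  have hsub2 : π₂.IsSubordinate (hg.convergenceR 1 c₂) :=
    h₂.1.mono' fun J _ => Subtype.coe_le_coe.1 (min_le_left _ _)
  have hU12 : π₁.iUnion = π₂.iUnion := by
    rw [(TaggedPrepartition.isPartition_iff_iUnion_eq _).1 hp₁,
      (TaggedPrepartition.isPartition_iff_iUnion_eq _).1 hp₂]
  have hmid := hsg.dist_integralSum_le_of_memBaseSet hε40 hε40
    (h₁.mono I le_rfl le_rfl (fun x _ => Subtype.coe_le_coe.1 (min_le_right _ _)))
    (h₂.mono I le_rfl le_rfl (fun x _ => Subtype.coe_le_coe.1 (min_le_right _ _)))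
    hU12
  have hfin := dist_triangle4
    (integralSum (fun x => β x • g x) (volume : Measure (ι → ℝ)).toBoxAdditive.toSMul π₁)
    (integralSum sg (volume : Measure (ι → ℝ)).toBoxAdditive.toSMul π₁)
    (integralSum sg (volume : Measure (ι → ℝ)).toBoxAdditive.toSMul π₂)
    (integralSum (fun x => β x • g x) (volume : Measure (ι → ℝ)).toBoxAdditive.toSMul π₂)
  have hd1 := hdiff c₁ π₁ hsub1
  have hd2 := hdiff c₂ π₂ hsub2
  rw [← dist_eq_norm] at hd1 hd2
  rw [dist_comm (integralSum sg (volume : Measure (ι → ℝ)).toBoxAdditive.toSMul π₂)] at hfin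
  have hAA : 2 * ε₂ * A + (ε / 4 + ε / 4) + 2 * ε₂ * A ≤ ε := by nlinarith
  calc dist (integralSum (fun x => β x • g x)
          (volume : Measure (ι → ℝ)).toBoxAdditive.toSMul π₁)
        (integralSum (fun x => β x • g x)
          (volume : Measure (ι → ℝ)).toBoxAdditive.toSMul π₂)
      ≤ _ + _ + _ := hfin
    _ ≤ 2 * ε₂ * A + (ε / 4 + ε / 4) + 2 * ε₂ * A := by
        refine add_le_add (add_le_add hd1 hmid) hd2
    _ ≤ ε := hAA

end McShaneAux
end

/-- The unit interval `[0,1]` as a one-dimensional box. -/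
noncomputable def unitBox : BoxIntegral.Box (Fin 1) :=
  ⟨fun _ => (0 : ℝ), fun _ => (1 : ℝ), fun _ => one_pos⟩

/-- If `g : [0,1] → X` is McShane integrable and `α : [0,1] → ℝ` is bounded and measurable,
then `t ↦ α t • g t` is McShane integrable on `[0,1]`. -/
theorem mcShane_integrable_smul {X : Type*} [NormedAddCommGroup X] [NormedSpace ℝ X]
    [CompleteSpace X] (g : ℝ → X) (α : ℝ → ℝ) (hαm : Measurable α) (C : ℝ)
    (hαb : ∀ t ∈ Set.Icc (0 : ℝ) 1, |α t| ≤ C) (y : X)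
    (hg : BoxIntegral.HasIntegral unitBox BoxIntegral.IntegrationParams.McShane
      (fun v => g (v 0)) volume.toBoxAdditive.toSMul y) :
    ∃ z : X, BoxIntegral.HasIntegral unitBox BoxIntegral.IntegrationParams.McShane
      (fun v => α (v 0) • g (v 0)) volume.toBoxAdditive.toSMul z := by
  have hInt : BoxIntegral.Integrable unitBox BoxIntegral.IntegrationParams.McShane
      (fun v => g (v 0)) (volume : Measure (Fin 1 → ℝ)).toBoxAdditive.toSMul := ⟨y, hg⟩
  have hβm : Measurable fun v : Fin 1 → ℝ => α (v 0) := hαm.comp (measurable_pi_apply 0)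
  have hβb : ∀ v ∈ BoxIntegral.Box.Icc unitBox, |α (v 0)| ≤ C := by
    intro v hv
    exact hαb (v 0) ⟨hv.1 0, hv.2 0⟩
  exact McShaneAux.integrable_smul_mcShane hInt hβm hβb
end

section
/- Let X be a real Banach space and g : [0,1] → X Bochner integrable with respect to Lebesgue measure. Then the set IS_G = { ∫₀¹ φ(t) • g(t) dt : φ : [0,1] → ℝ measurable with 0 ≤ φ(t) ≤ 1 for all t } is convex and compact in the weak topology of X. -/
open MeasureTheory Set Filter Topology

set_option linter.unusedSectionVars false

noncomputable section

namespace ISGAux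

abbrev μ0 : Measure ℝ := volume.restrict (Set.Icc (0 : ℝ) 1)

instance : IsProbabilityMeasure μ0 := by
  constructor
  rw [Measure.restrict_apply_univ]
  simp

def Adm (φ : ℝ → ℝ) : Prop := Measurable φ ∧ ∀ t, φ t ∈ Set.Icc (0:ℝ) 1

theorem Adm.norm_le_one {φ : ℝ → ℝ} (hφ : Adm φ) (t : ℝ) : ‖φ t‖ ≤ 1 := by
  have h0 := (hφ.2 t).1; have h1 := (hφ.2 t).2
  rw [Real.norm_eq_abs, abs_le]; constructor <;> linarith

variable {X : Type*} [NormedAddCommGroup X] [NormedSpace ℝ X] [CompleteSpace X]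

theorem Adm.integrable_smul {φ : ℝ → ℝ} (hφ : Adm φ) {f : ℝ → X} (hf : Integrable f μ0) :
    Integrable (fun t => φ t • f t) μ0 := by
  refine Integrable.mono hf (hφ.1.aestronglyMeasurable.smul hf.1) (ae_of_all _ fun t => ?_)
  rw [norm_smul]
  calc ‖φ t‖ * ‖f t‖ ≤ 1 * ‖f t‖ :=
        mul_le_mul_of_nonneg_right (hφ.norm_le_one t) (norm_nonneg _)
    _ = ‖f t‖ := one_mul _

theorem Adm.integrable {φ : ℝ → ℝ} (hφ : Adm φ) : Integrable φ μ0 := by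
  refine Integrable.mono (integrable_const (1:ℝ)) hφ.1.aestronglyMeasurable
    (ae_of_all _ fun t => ?_)
  simpa using hφ.norm_le_one t

theorem Adm.integrable_mul {φ : ℝ → ℝ} (hφ : Adm φ) (f : Lp ℝ 1 μ0) :
    Integrable (fun t => φ t * (f : ℝ → ℝ) t) μ0 :=
  (L1.integrable_coeFn f).bdd_mul hφ.1.aestronglyMeasurable (c := 1) (ae_of_all _ hφ.norm_le_one)

def pairLM (φ : ℝ → ℝ) (hφ : Adm φ) : Lp ℝ 1 μ0 →ₗ[ℝ] ℝ where
  toFun f := ∫ t, φ t * (f : ℝ → ℝ) t ∂μ0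
  map_add' f g := by
    rw [← integral_add (hφ.integrable_mul f) (hφ.integrable_mul g)]
    refine integral_congr_ae ?_
    filter_upwards [Lp.coeFn_add f g] with t ht
    rw [ht, Pi.add_apply, mul_add]
  map_smul' c f := by
    simp only [RingHom.id_apply, smul_eq_mul]
    rw [← smul_eq_mul, ← integral_smul]
    refine integral_congr_ae ?_
    filter_upwards [Lp.coeFn_smul c f] with t ht
    simp [ht]
    ring

theorem pairLM_bound (φ : ℝ → ℝ) (hφ : Adm φ) (f : Lp ℝ 1 μ0) :
    ‖pairLM φ hφ f‖ ≤ ‖f‖ := by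
  have h1 : ‖pairLM φ hφ f‖ ≤ ∫ t, ‖φ t * (f : ℝ → ℝ) t‖ ∂μ0 :=
    norm_integral_le_integral_norm _
  refine h1.trans ?_
  rw [L1.norm_eq_integral_norm]
  refine integral_mono (hφ.integrable_mul f).norm (L1.integrable_coeFn f).norm fun t => ?_
  rw [norm_mul]
  calc ‖φ t‖ * ‖(f : ℝ → ℝ) t‖ ≤ 1 * ‖(f : ℝ → ℝ) t‖ :=
        mul_le_mul_of_nonneg_right (hφ.norm_le_one t) (norm_nonneg _)
    _ = ‖(f : ℝ → ℝ) t‖ := one_mul _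

def pairW (φ : ℝ → ℝ) (hφ : Adm φ) : WeakDual ℝ (Lp ℝ 1 μ0) :=
  StrongDual.toWeakDual ((pairLM φ hφ).mkContinuous 1 (fun f => by
    simpa using pairLM_bound φ hφ f))

theorem pairW_apply (φ : ℝ → ℝ) (hφ : Adm φ) (f : Lp ℝ 1 μ0) :
    pairW φ hφ f = ∫ t, φ t * (f : ℝ → ℝ) t ∂μ0 := rfl

def indE (A : Set ℝ) (hA : MeasurableSet A) : Lp ℝ 1 μ0 :=
  indicatorConstLp 1 hA (measure_ne_top μ0 A) (1:ℝ)

theorem pairW_indE {φ : ℝ → ℝ} (hφ : Adm φ) {A : Set ℝ} (hA : MeasurableSet A) :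
    pairW φ hφ (indE A hA) = ∫ t in A, φ t ∂μ0 := by
  rw [pairW_apply, ← integral_indicator hA]
  refine integral_congr_ae ?_
  filter_upwards [indicatorConstLp_coeFn (p := 1) (hs := hA)
    (hμs := measure_ne_top μ0 A) (c := (1:ℝ))] with t ht
  rw [indE, ht]
  by_cases h : t ∈ A <;> simp [h]


theorem pairW_bound (φ : ℝ → ℝ) (hφ : Adm φ) (f : Lp ℝ 1 μ0) : ‖pairW φ hφ f‖ ≤ ‖f‖ := by
  rw [pairW_apply]
  exact pairLM_bound φ hφ f

-- decomposition of ∫ φ • s for simple s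
theorem integral_smul_simpleFunc {φ : ℝ → ℝ} (hφ : Adm φ) (s : SimpleFunc ℝ X) :
    ∫ t, φ t • s t ∂μ0 = ∑ v ∈ s.range, (∫ t in s ⁻¹' {v}, φ t ∂μ0) • v := by
  have key : ∀ t : ℝ, φ t • s t
      = ∑ v ∈ s.range, ((s ⁻¹' {v}).indicator φ t) • v := by
    intro t
    rw [Finset.sum_eq_single (s t)]
    · rw [Set.indicator_of_mem (by simp)]
    · intro v hv hne
      rw [Set.indicator_of_notMem (by simp [Ne.symm hne]), zero_smul]
    · intro h; exact absurd (SimpleFunc.mem_range_self s t) h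
  simp_rw [key]
  rw [integral_finset_sum]
  · refine Finset.sum_congr rfl fun v _ => ?_
    rw [integral_smul_const, integral_indicator (s.measurableSet_fiber v)]
  · intro v _
    exact (hφ.integrable.indicator (s.measurableSet_fiber v)).smul_const v

theorem norm_integral_sub_le {φ : ℝ → ℝ} (hφ : Adm φ) {f₁ f₂ : ℝ → X}
    (h₁ : Integrable f₁ μ0) (h₂ : Integrable f₂ μ0) :
    ‖(∫ t, φ t • f₁ t ∂μ0) - ∫ t, φ t • f₂ t ∂μ0‖ ≤ ∫ t, ‖f₁ t - f₂ t‖ ∂μ0 := by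
  rw [← integral_sub (hφ.integrable_smul h₁) (hφ.integrable_smul h₂)]
  have e : ∀ t : ℝ, φ t • f₁ t - φ t • f₂ t = φ t • (f₁ t - f₂ t) := fun t => (smul_sub _ _ _).symm
  simp_rw [e]
  refine (norm_integral_le_integral_norm _).trans ?_
  refine integral_mono (hφ.integrable_smul (h₁.sub h₂)).norm (h₁.sub h₂).norm fun t => ?_
  rw [norm_smul]
  calc ‖φ t‖ * ‖f₁ t - f₂ t‖ ≤ 1 * ‖f₁ t - f₂ t‖ :=
        mul_le_mul_of_nonneg_right (hφ.norm_le_one t) (norm_nonneg _)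
    _ = ‖f₁ t - f₂ t‖ := one_mul _

theorem exists_simple_approx {g : ℝ → X} (hg : Integrable g μ0) {ε : ℝ} (hε : 0 < ε) :
    ∃ s : SimpleFunc ℝ X, Integrable (fun t => s t) μ0 ∧ ∫ t, ‖g t - s t‖ ∂μ0 < ε := by
  obtain ⟨s, hs, hsmem⟩ := (memLp_one_iff_integrable.2 hg).exists_simpleFunc_eLpNorm_sub_lt
    ENNReal.one_ne_top (ε := ENNReal.ofReal ε) (by simp [hε])
  refine ⟨s, memLp_one_iff_integrable.1 hsmem, ?_⟩
  have hint : Integrable (fun t => g t - s t) μ0 := hg.sub (memLp_one_iff_integrable.1 hsmem)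
  have h1 : ∫ t, ‖g t - s t‖ ∂μ0 = (eLpNorm (g - fun t => s t) 1 μ0).toReal := by
    rw [integral_norm_eq_lintegral_enorm hint.1, eLpNorm_one_eq_lintegral_enorm]
    rfl
  rw [h1]
  have hne : eLpNorm (g - fun t => s t) 1 μ0 ≠ ⊤ := (hs.trans_le le_top).ne
  have h2 := (ENNReal.toReal_lt_toReal hne ENNReal.ofReal_ne_top).2 hs
  rwa [ENNReal.toReal_ofReal hε.le] at h2

def KK : Set (WeakDual ℝ (Lp ℝ 1 μ0)) :=
  WeakDual.polar ℝ (Metric.closedBall (0 : Lp ℝ 1 μ0) 1) ∩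
    {ξ | ∀ (A : Set ℝ) (hA : MeasurableSet A), ξ (indE A hA) ∈ Set.Icc 0 ((μ0 A).toReal)}

theorem KK_compact : IsCompact KK := by
  refine (WeakDual.isCompact_polar ℝ (Metric.closedBall_mem_nhds (0 : Lp ℝ 1 μ0)
    one_pos)).inter_right ?_
  have : {ξ : WeakDual ℝ (Lp ℝ 1 μ0) |
      ∀ (A : Set ℝ) (hA : MeasurableSet A), ξ (indE A hA) ∈ Set.Icc 0 ((μ0 A).toReal)}
      = ⋂ (A : Set ℝ), ⋂ (hA : MeasurableSet A),
        (fun ξ : WeakDual ℝ (Lp ℝ 1 μ0) => ξ (indE A hA)) ⁻¹' (Set.Icc 0 ((μ0 A).toReal)) := by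
    ext ξ; simp [Set.mem_iInter]
  rw [this]
  exact isClosed_iInter fun A => isClosed_iInter fun hA =>
    isClosed_Icc.preimage (WeakDual.eval_continuous _)

theorem pairW_mem_KK {φ : ℝ → ℝ} (hφ : Adm φ) : pairW φ hφ ∈ KK := by
  constructor
  · intro f hf
    rw [Metric.mem_closedBall, dist_zero_right] at hf
    exact (pairW_bound φ hφ f).trans hf
  · intro A hA
    rw [pairW_indE hφ hA]
    constructor
    · exact setIntegral_nonneg hA fun t _ => (hφ.2 t).1
    · have h1 : ∫ t in A, φ t ∂μ0 ≤ ∫ _ in A, (1:ℝ) ∂μ0 :=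
        setIntegral_mono_on hφ.integrable.restrict (integrable_const _).restrict hA
          (fun t _ => (hφ.2 t).2)
      simpa [measureReal_def] using h1

def toL1 (f : Lp ℝ 2 μ0) : Lp ℝ 1 μ0 :=
  ((Lp.memLp f).mono_exponent one_le_two).toLp f

theorem toL1_coeFn (f : Lp ℝ 2 μ0) : (toL1 f : ℝ → ℝ) =ᵐ[μ0] f :=
  MemLp.coeFn_toLp _

theorem toL1_norm (f : Lp ℝ 2 μ0) : ‖toL1 f‖ ≤ ‖f‖ := by
  rw [toL1, Lp.norm_toLp, Lp.norm_def]
  refine ENNReal.toReal_mono (Lp.eLpNorm_ne_top f) ?_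
  exact eLpNorm_le_eLpNorm_of_exponent_le one_le_two (Lp.aestronglyMeasurable f)

theorem toL1_add (f g : Lp ℝ 2 μ0) : toL1 (f + g) = toL1 f + toL1 g := by
  refine Lp.ext ?_
  filter_upwards [toL1_coeFn (f + g), toL1_coeFn f, toL1_coeFn g, Lp.coeFn_add f g,
    Lp.coeFn_add (toL1 f) (toL1 g)] with t h1 h2 h3 h4 h5
  rw [h1, h5, h4, Pi.add_apply, Pi.add_apply, h2, h3]

theorem toL1_smul (c : ℝ) (f : Lp ℝ 2 μ0) : toL1 (c • f) = c • toL1 f := by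
  refine Lp.ext ?_
  filter_upwards [toL1_coeFn (c • f), toL1_coeFn f, Lp.coeFn_smul c f,
    Lp.coeFn_smul c (toL1 f)] with t h1 h2 h3 h4
  rw [h1, h4, h3, Pi.smul_apply, Pi.smul_apply, h2]

def ind2 (A : Set ℝ) (hA : MeasurableSet A) : Lp ℝ 2 μ0 :=
  indicatorConstLp 2 hA (measure_ne_top μ0 A) (1:ℝ)

theorem toL1_ind2 {A : Set ℝ} (hA : MeasurableSet A) : toL1 (ind2 A hA) = indE A hA := by
  refine Lp.ext ?_
  filter_upwards [toL1_coeFn (ind2 A hA),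
    indicatorConstLp_coeFn (p := 2) (hs := hA) (hμs := measure_ne_top μ0 A) (c := (1:ℝ)),
    indicatorConstLp_coeFn (p := 1) (hs := hA) (hμs := measure_ne_top μ0 A) (c := (1:ℝ))]
    with t h1 h2 h3
  rw [h1, indE, h3, ind2] at *
  exact h2

theorem KK_rep {ξ : WeakDual ℝ (Lp ℝ 1 μ0)} (hξ : ξ ∈ KK) :
    ∃ φ : ℝ → ℝ, Adm φ ∧ ∀ (A : Set ℝ) (hA : MeasurableSet A),
      ∫ t in A, φ t ∂μ0 = ξ (indE A hA) := by
  classical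
  -- general norm bound for ξ
  have hb : ∀ f : Lp ℝ 1 μ0, ‖ξ f‖ ≤ ‖f‖ := by
    intro f
    rcases eq_or_ne f 0 with rfl | hf0
    · simp [map_zero]
    · have hpos : 0 < ‖f‖ := norm_pos_iff.2 hf0
      have h1 : ‖(‖f‖⁻¹ • f : Lp ℝ 1 μ0)‖ ≤ 1 := by
        rw [norm_smul, norm_inv, norm_norm, inv_mul_cancel₀ hpos.ne']
      have h2 : ‖ξ (‖f‖⁻¹ • f)‖ ≤ 1 :=
        hξ.1 _ (by rwa [Metric.mem_closedBall, dist_zero_right])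
      have h3 : ξ f = ‖f‖ * ξ (‖f‖⁻¹ • f) := by
        rw [_root_.map_smul, smul_eq_mul, ← mul_assoc, mul_inv_cancel₀ hpos.ne', one_mul]
      rw [h3, norm_mul, norm_norm]
      calc ‖f‖ * ‖ξ (‖f‖⁻¹ • f)‖ ≤ ‖f‖ * 1 := mul_le_mul_of_nonneg_left h2 hpos.le
        _ = ‖f‖ := mul_one _
  -- the functional on L2
  set ηlin : Lp ℝ 2 μ0 →ₗ[ℝ] ℝ :=
    { toFun := fun f => ξ (toL1 f)
      map_add' := fun f g => by
        show ξ (toL1 (f + g)) = ξ (toL1 f) + ξ (toL1 g)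
        rw [toL1_add, map_add]
      map_smul' := fun c f => by
        show ξ (toL1 (c • f)) = (RingHom.id ℝ) c • ξ (toL1 f)
        rw [toL1_smul, _root_.map_smul]; rfl } with hηlin
  set η : Lp ℝ 2 μ0 →L[ℝ] ℝ := ηlin.mkContinuous 1 (fun f => by
    simpa [hηlin] using (hb (toL1 f)).trans (toL1_norm f)) with hη
  set h : Lp ℝ 2 μ0 := (InnerProductSpace.toDual ℝ (Lp ℝ 2 μ0)).symm η with hh
  have hprop : ∀ f : Lp ℝ 2 μ0, ∫ t, (h : ℝ → ℝ) t * (f : ℝ → ℝ) t ∂μ0 = ξ (toL1 f) := by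
    intro f
    have e1 : inner (𝕜 := ℝ) h f = η f := InnerProductSpace.toDual_symm_apply
    have e2 : inner (𝕜 := ℝ) h f = ∫ t, inner (𝕜 := ℝ) ((h : ℝ → ℝ) t) ((f : ℝ → ℝ) t) ∂μ0 :=
      L2.inner_def h f
    have e3 : ∫ t, inner (𝕜 := ℝ) ((h : ℝ → ℝ) t) ((f : ℝ → ℝ) t) ∂μ0
        = ∫ t, (h : ℝ → ℝ) t * (f : ℝ → ℝ) t ∂μ0 := by
      refine integral_congr_ae (ae_of_all _ fun t => ?_)
      simp [RCLike.inner_apply, mul_comm]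
    rw [← e3, ← e2, e1]
    rfl
  have key : ∀ (A : Set ℝ) (hA : MeasurableSet A),
      ∫ t in A, (h : ℝ → ℝ) t ∂μ0 = ξ (indE A hA) := by
    intro A hA
    have e1 : ∫ t, (h : ℝ → ℝ) t * (ind2 A hA : ℝ → ℝ) t ∂μ0 = ξ (indE A hA) := by
      rw [hprop (ind2 A hA), toL1_ind2 hA]
    rw [← e1, ← integral_indicator hA]
    refine integral_congr_ae ?_
    filter_upwards [indicatorConstLp_coeFn (p := 2) (hs := hA)
      (hμs := measure_ne_top μ0 A) (c := (1:ℝ))] with t ht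
    rw [ind2, ht]
    by_cases hmem : t ∈ A <;> simp [hmem]
  -- h is integrable, in [0,1] a.e.
  have hint : Integrable ((h : ℝ → ℝ)) μ0 :=
    memLp_one_iff_integrable.1 ((Lp.memLp h).mono_exponent one_le_two)
  have h0 : 0 ≤ᵐ[μ0] (h : ℝ → ℝ) := by
    refine ae_nonneg_of_forall_setIntegral_nonneg hint fun A hA _ => ?_
    rw [key A hA]
    exact (hξ.2 A hA).1
  have h1 : ∀ᵐ t ∂μ0, (h : ℝ → ℝ) t ≤ 1 := by
    have step : 0 ≤ᵐ[μ0] (fun t => 1 - (h : ℝ → ℝ) t) := by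
      refine ae_nonneg_of_forall_setIntegral_nonneg ((integrable_const _).sub hint)
        fun A hA _ => ?_
      rw [integral_sub (integrable_const _).restrict hint.restrict, key A hA]
      have := (hξ.2 A hA).2
      simp only [setIntegral_const, smul_eq_mul, mul_one, measureReal_def]
      linarith
    filter_upwards [step] with t ht
    simp only [Pi.zero_apply] at ht
    linarith
  -- measurable representative truncated to [0,1]
  set ha := Lp.aestronglyMeasurable h with hha
  set φ : ℝ → ℝ := fun t => max 0 (min (ha.mk (h : ℝ → ℝ) t) 1) with hφdef
  have hφAdm : Adm φ := by
    constructor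
    · exact measurable_const.max ((ha.stronglyMeasurable_mk.measurable).min measurable_const)
    · intro t
      exact ⟨le_max_left _ _, max_le zero_le_one (min_le_right _ _)⟩
  have hae : φ =ᵐ[μ0] (h : ℝ → ℝ) := by
    filter_upwards [ha.ae_eq_mk, h0, h1] with t he h0t h1t
    simp only [Pi.zero_apply] at h0t
    simp only [hφdef]
    rw [← he, min_eq_left h1t, max_eq_right h0t]
  refine ⟨φ, hφAdm, fun A hA => ?_⟩
  rw [← key A hA]
  exact integral_congr_ae (ae_restrict_of_ae hae)

def SS (g : ℝ → X) : Set X :=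
  {x : X | ∃ φ : ℝ → ℝ, Measurable φ ∧ (∀ t, φ t ∈ Set.Icc (0 : ℝ) 1) ∧
    x = ∫ t in Set.Icc (0 : ℝ) 1, φ t • g t}

theorem SS_totallyBounded {g : ℝ → X} (hg : Integrable g μ0) : TotallyBounded (SS g) := by
  rw [Metric.totallyBounded_iff]
  intro ε hε
  obtain ⟨s, hsint, hsapp⟩ := exists_simple_approx hg (show (0:ℝ) < ε/4 by linarith)
  set L : (↥s.range → ℝ) → X := fun c => ∑ v ∈ s.range.attach, c v • (v : X) with hL
  have hLcont : Continuous L :=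
    continuous_finset_sum _ fun v _ => (continuous_apply v).smul continuous_const
  set B : Set (↥s.range → ℝ) :=
    Set.univ.pi fun v => Set.Icc 0 ((μ0 (s ⁻¹' {(v : X)})).toReal) with hB
  have hBcomp : IsCompact B := isCompact_univ_pi fun v => isCompact_Icc
  have hC := hBcomp.image hLcont
  obtain ⟨T, hTfin, hTcov⟩ := Metric.totallyBounded_iff.1 hC.totallyBounded (ε/2) (by linarith)
  refine ⟨T, hTfin, fun x hx => ?_⟩
  obtain ⟨φ, hφm, hφmem, rfl⟩ := hx
  have hφ : Adm φ := ⟨hφm, hφmem⟩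
  set c : ↥s.range → ℝ := fun v => ∫ u in s ⁻¹' {(v : X)}, φ u ∂μ0 with hc
  have hcB : c ∈ B := by
    intro v _
    constructor
    · exact setIntegral_nonneg (s.measurableSet_fiber _) fun u _ => (hφ.2 u).1
    · have h1 : ∫ u in s ⁻¹' {(v:X)}, φ u ∂μ0 ≤ ∫ _ in s ⁻¹' {(v:X)}, (1:ℝ) ∂μ0 :=
        setIntegral_mono_on hφ.integrable.restrict (integrable_const _).restrict
          (s.measurableSet_fiber _) fun u _ => (hφ.2 u).2
      simpa [measureReal_def] using h1
  have hLc : L c = ∫ u, φ u • s u ∂μ0 := by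
    rw [integral_smul_simpleFunc hφ s, hL]
    exact Finset.sum_attach s.range fun v => (∫ u in s ⁻¹' {v}, φ u ∂μ0) • v
  have hmemC : L c ∈ L '' B := ⟨c, hcB, rfl⟩
  obtain ⟨y, hyT, hyball⟩ := Set.mem_iUnion₂.1 (hTcov hmemC)
  refine Set.mem_iUnion₂.2 ⟨y, hyT, ?_⟩
  rw [Metric.mem_ball]
  have d1 : dist (∫ t in Set.Icc (0:ℝ) 1, φ t • g t) (L c) < ε/4 := by
    rw [hLc, dist_eq_norm]
    exact lt_of_le_of_lt (norm_integral_sub_le hφ hg hsint) hsapp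
  have d2 : dist (L c) y < ε/2 := Metric.mem_ball.1 hyball
  calc dist (∫ t in Set.Icc (0:ℝ) 1, φ t • g t) y
      ≤ dist (∫ t in Set.Icc (0:ℝ) 1, φ t • g t) (L c) + dist (L c) y := dist_triangle _ _ _
    _ < ε/4 + ε/2 := add_lt_add d1 d2
    _ < ε := by linarith

theorem SS_isClosed {g : ℝ → X} (hg : Integrable g μ0) : IsClosed (SS g) := by
  refine IsSeqClosed.isClosed ?_
  intro y x hy hyx
  choose φn hm hmem heq using hy
  set ξn : ℕ → WeakDual ℝ (Lp ℝ 1 μ0) := fun n => pairW (φn n) ⟨hm n, hmem n⟩ with hξn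
  have hle : Filter.map ξn atTop ≤ 𝓟 KK := by
    rw [le_principal_iff, mem_map]
    exact Filter.Eventually.of_forall fun n => pairW_mem_KK _
  obtain ⟨ξ, hξK, hcl⟩ := KK_compact.exists_clusterPt hle
  obtain ⟨φ, hφ, hrep⟩ := KK_rep hξK
  have main : ∀ ε > 0, ‖x - ∫ t, φ t • g t ∂μ0‖ < ε := by
    intro ε hε
    obtain ⟨s, hsint, hsapp⟩ := exists_simple_approx hg (show (0:ℝ) < ε/4 by linarith)
    set M : ℝ := ∑ v ∈ s.range, ‖v‖ with hM
    have hM0 : 0 ≤ M := Finset.sum_nonneg fun v _ => norm_nonneg v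
    set δ : ℝ := (ε/4) / (M + 1) with hδ
    have hδpos : 0 < δ := div_pos (by linarith) (by linarith)
    set U : Set (WeakDual ℝ (Lp ℝ 1 μ0)) := ⋂ v ∈ s.range,
      {η : WeakDual ℝ (Lp ℝ 1 μ0) |
        |η (indE (s ⁻¹' {v}) (s.measurableSet_fiber v))
          - ξ (indE (s ⁻¹' {v}) (s.measurableSet_fiber v))| < δ} with hU
    have hUopen : IsOpen U := by
      refine isOpen_biInter_finset fun v _ => ?_
      have hco : Continuous fun η : WeakDual ℝ (Lp ℝ 1 μ0) =>
          |η (indE (s ⁻¹' {v}) (s.measurableSet_fiber v))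
            - ξ (indE (s ⁻¹' {v}) (s.measurableSet_fiber v))| :=
        ((WeakDual.eval_continuous _).sub continuous_const).abs
      exact isOpen_Iio.preimage hco
    have hUmem : U ∈ 𝓝 ξ := hUopen.mem_nhds (Set.mem_iInter₂.2 fun v _ => by
      simp [hδpos])
    have hfreq : ∃ᶠ n in atTop, ξn n ∈ U :=
      mapClusterPt_iff_frequently.1 (hcl : MapClusterPt ξ atTop ξn) U hUmem
    have hev : ∀ᶠ n in atTop, dist (y n) x < ε/4 :=
      Metric.tendsto_nhds.mp hyx _ (by linarith)
    obtain ⟨n, hnU, hnd⟩ := (hfreq.and_eventually hev).exists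
    have hAn : Adm (φn n) := ⟨hm n, hmem n⟩
    have hbc : ‖(∫ t, φn n t • g t ∂μ0) - ∫ t, φn n t • s t ∂μ0‖ < ε/4 :=
      lt_of_le_of_lt (norm_integral_sub_le hAn hg hsint) hsapp
    have hde : ‖(∫ t, φ t • s t ∂μ0) - ∫ t, φ t • g t ∂μ0‖ < ε/4 := by
      refine lt_of_le_of_lt (norm_integral_sub_le hφ hsint hg) ?_
      have : ∫ t, ‖s t - g t‖ ∂μ0 = ∫ t, ‖g t - s t‖ ∂μ0 :=
        integral_congr_ae (ae_of_all _ fun t => norm_sub_rev _ _)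
      rw [this]; exact hsapp
    have hcd : ‖(∫ t, φn n t • s t ∂μ0) - ∫ t, φ t • s t ∂μ0‖ ≤ ε/4 := by
      rw [integral_smul_simpleFunc hAn s, integral_smul_simpleFunc hφ s, ← Finset.sum_sub_distrib]
      have hterm : ∀ v ∈ s.range,
          ‖(∫ t in s ⁻¹' {v}, φn n t ∂μ0) • v - (∫ t in s ⁻¹' {v}, φ t ∂μ0) • v‖ ≤ δ * ‖v‖ := by
        intro v hv
        rw [← sub_smul, norm_smul]
        have habs : |(∫ t in s ⁻¹' {v}, φn n t ∂μ0) - ∫ t in s ⁻¹' {v}, φ t ∂μ0| ≤ δ := by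
          have h1 : ∫ t in s ⁻¹' {v}, φn n t ∂μ0
              = ξn n (indE (s ⁻¹' {v}) (s.measurableSet_fiber v)) := (pairW_indE _ _).symm
          have h2 : ∫ t in s ⁻¹' {v}, φ t ∂μ0
              = ξ (indE (s ⁻¹' {v}) (s.measurableSet_fiber v)) := hrep _ _
          rw [h1, h2]
          exact le_of_lt (Set.mem_iInter₂.1 hnU v hv)
        exact mul_le_mul_of_nonneg_right habs (norm_nonneg v)
      calc ‖∑ v ∈ s.range, ((∫ t in s ⁻¹' {v}, φn n t ∂μ0) • v - (∫ t in s ⁻¹' {v}, φ t ∂μ0) • v)‖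
          ≤ ∑ v ∈ s.range, ‖(∫ t in s ⁻¹' {v}, φn n t ∂μ0) • v - (∫ t in s ⁻¹' {v}, φ t ∂μ0) • v‖ :=
            norm_sum_le _ _
        _ ≤ ∑ v ∈ s.range, δ * ‖v‖ := Finset.sum_le_sum hterm
        _ = δ * M := by rw [hM, Finset.mul_sum]
        _ ≤ δ * (M + 1) := by nlinarith
        _ = ε/4 := by rw [hδ]; field_simp
    have hyneq : y n = ∫ t, φn n t • g t ∂μ0 := heq n
    have hab : dist x (∫ t, φn n t • g t ∂μ0) < ε/4 := by
      rw [← hyneq, dist_comm]; exact hnd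
    rw [← dist_eq_norm]
    calc dist x (∫ t, φ t • g t ∂μ0)
        ≤ dist x (∫ t, φn n t • g t ∂μ0) + dist (∫ t, φn n t • g t ∂μ0) (∫ t, φn n t • s t ∂μ0)
          + dist (∫ t, φn n t • s t ∂μ0) (∫ t, φ t • g t ∂μ0) := dist_triangle4 _ _ _ _
      _ ≤ dist x (∫ t, φn n t • g t ∂μ0) + dist (∫ t, φn n t • g t ∂μ0) (∫ t, φn n t • s t ∂μ0)
          + (dist (∫ t, φn n t • s t ∂μ0) (∫ t, φ t • s t ∂μ0)
            + dist (∫ t, φ t • s t ∂μ0) (∫ t, φ t • g t ∂μ0)) := by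
          gcongr
          exact dist_triangle _ _ _
      _ < ε/4 + ε/4 + (ε/4 + ε/4) := by
          refine add_lt_add (add_lt_add hab ?_) (add_lt_add_of_le_of_lt ?_ ?_)
          · rw [dist_eq_norm]; exact hbc
          · rw [dist_eq_norm]; exact hcd
          · rw [dist_eq_norm]; exact hde
      _ = ε := by ring
  have hx : x = ∫ t, φ t • g t ∂μ0 := by
    by_contra hne
    have hpos : 0 < ‖x - ∫ t, φ t • g t ∂μ0‖ := by
      rw [norm_pos_iff, sub_ne_zero]; exact hne
    exact absurd (main _ hpos) (lt_irrefl _)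
  exact ⟨φ, hφ.1, hφ.2, hx⟩

theorem SS_convex {g : ℝ → X} (hg : Integrable g μ0) : Convex ℝ (SS g) := by
  intro x hx y hy a b ha hb hab
  obtain ⟨φ1, h1m, h1mem, rfl⟩ := hx
  obtain ⟨φ2, h2m, h2mem, rfl⟩ := hy
  have hA1 : Adm φ1 := ⟨h1m, h1mem⟩
  have hA2 : Adm φ2 := ⟨h2m, h2mem⟩
  refine ⟨fun t => a * φ1 t + b * φ2 t,
    (measurable_const.mul h1m).add (measurable_const.mul h2m), fun t => ?_, ?_⟩
  · constructor
    · show (0:ℝ) ≤ a * φ1 t + b * φ2 t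
      have := (h1mem t).1; have := (h2mem t).1
      positivity
    · show a * φ1 t + b * φ2 t ≤ 1
      have h1 := (h1mem t).2; have h2 := (h2mem t).2
      have k1 : 0 ≤ a * (1 - φ1 t) := mul_nonneg ha (by linarith)
      have k2 : 0 ≤ b * (1 - φ2 t) := mul_nonneg hb (by linarith)
      nlinarith
  · have h1 : Integrable (fun t => φ1 t • g t) μ0 := hA1.integrable_smul hg
    have h2 : Integrable (fun t => φ2 t • g t) μ0 := hA2.integrable_smul hg
    have e1 : (∫ t in Set.Icc (0:ℝ) 1, (a * φ1 t + b * φ2 t) • g t)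
        = ∫ t, (a • (φ1 t • g t) + b • (φ2 t • g t)) ∂μ0 :=
      integral_congr_ae (ae_of_all _ fun t => by simp only [add_smul, mul_smul])
    have e2 : ∫ t, (a • (φ1 t • g t) + b • (φ2 t • g t)) ∂μ0
        = a • (∫ t, φ1 t • g t ∂μ0) + b • (∫ t, φ2 t • g t ∂μ0) := by
      have ha1 : Integrable (fun t => a • (φ1 t • g t)) μ0 := h1.smul a
      have hb2 : Integrable (fun t => b • (φ2 t • g t)) μ0 := h2.smul b
      rw [integral_add ha1 hb2, integral_smul, integral_smul]
    show a • (∫ t, φ1 t • g t ∂μ0) + b • (∫ t, φ2 t • g t ∂μ0)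
        = ∫ t in Set.Icc (0:ℝ) 1, (a * φ1 t + b * φ2 t) • g t
    rw [e1, e2]

theorem final {g : ℝ → X} (hg : Integrable g (volume.restrict (Set.Icc (0 : ℝ) 1))) :
    Convex ℝ {x : X | ∃ φ : ℝ → ℝ, Measurable φ ∧ (∀ t, φ t ∈ Set.Icc (0 : ℝ) 1) ∧
        x = ∫ t in Set.Icc (0 : ℝ) 1, φ t • g t} ∧
      IsCompact (toWeakSpace ℝ X ''
        {x : X | ∃ φ : ℝ → ℝ, Measurable φ ∧ (∀ t, φ t ∈ Set.Icc (0 : ℝ) 1) ∧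
          x = ∫ t in Set.Icc (0 : ℝ) 1, φ t • g t}) := by
  have hg0 : Integrable g μ0 := hg
  refine ⟨SS_convex hg0, ?_⟩
  have hcomp : IsCompact (SS g) :=
    (SS_totallyBounded hg0).isCompact_of_isClosed (SS_isClosed hg0)
  have himg : toWeakSpace ℝ X '' SS g = toWeakSpaceCLM ℝ X '' SS g :=
    Set.image_congr fun x _ => (toWeakSpaceCLM_eq_toWeakSpace (𝕜 := ℝ) (E := X) x).symm
  show IsCompact (toWeakSpace ℝ X '' SS g)
  rw [himg]
  exact hcomp.image (toWeakSpaceCLM ℝ X).continuous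

end ISGAux
end

open MeasureTheory

/-- For a Bochner integrable `g : [0,1] → X`, the set
`IS_G = { ∫₀¹ φ(t) • g(t) dt : φ measurable, 0 ≤ φ ≤ 1 }` is convex and compact in the weak
topology of `X`. -/
theorem ISG_convex_weaklyCompact {X : Type*} [NormedAddCommGroup X] [NormedSpace ℝ X]
    [CompleteSpace X] (g : ℝ → X)
    (hg : Integrable g (volume.restrict (Set.Icc (0 : ℝ) 1))) :
    Convex ℝ {x : X | ∃ φ : ℝ → ℝ, Measurable φ ∧ (∀ t, φ t ∈ Set.Icc (0 : ℝ) 1) ∧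
        x = ∫ t in Set.Icc (0 : ℝ) 1, φ t • g t} ∧
      IsCompact (toWeakSpace ℝ X ''
        {x : X | ∃ φ : ℝ → ℝ, Measurable φ ∧ (∀ t, φ t ∈ Set.Icc (0 : ℝ) 1) ∧
          x = ∫ t in Set.Icc (0 : ℝ) 1, φ t • g t}) := by
  exact ISGAux.final hg
end

section
/- Let X be a real Banach space and g : [0,1] → X Bochner integrable with respect to Lebesgue measure. Then { ∫₀¹ φ(t) • g(t) dt : φ : [0,1] → ℝ measurable with 0 ≤ φ ≤ 1 } equals the norm closure of { ∫₀¹ s(t) • g(t) dt : s : [0,1] → ℝ a simple (finitely-valued measurable) function with 0 ≤ s ≤ 1 }. -/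
open MeasureTheory Set Filter Topology

noncomputable section
abbrev μ01 : Measure ℝ := volume.restrict (Icc (0:ℝ) 1)

instance : IsFiniteMeasure μ01 := by
  constructor
  rw [Measure.restrict_apply_univ]
  simp

lemma integrable_of_mem_Icc (ψ : ℝ → ℝ) (hm : Measurable ψ) (hb : ∀ t, ψ t ∈ Icc (0:ℝ) 1) :
    Integrable ψ μ01 := by
  apply Integrable.mono' (integrable_const (1:ℝ)) hm.aestronglyMeasurable
  refine Eventually.of_forall fun t => ?_
  rw [Real.norm_eq_abs, abs_le]
  exact ⟨by linarith [(hb t).1], (hb t).2⟩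

lemma setInt_nonneg (ψ : ℝ → ℝ) (hb : ∀ t, ψ t ∈ Icc (0:ℝ) 1) (A : Set ℝ) :
    0 ≤ ∫ t in A, ψ t ∂μ01 :=
  integral_nonneg fun t => (hb t).1

lemma setInt_le_measure (ψ : ℝ → ℝ) (hm : Measurable ψ) (hb : ∀ t, ψ t ∈ Icc (0:ℝ) 1)
    (A : Set ℝ) : ∫ t in A, ψ t ∂μ01 ≤ (μ01 A).toReal := by
  have h1 : ∫ t in A, ψ t ∂μ01 ≤ ∫ _ in A, (1:ℝ) ∂μ01 := by
    apply integral_mono ((integrable_of_mem_Icc ψ hm hb).restrict) (integrable_const 1)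
    exact fun t => (hb t).2
  simpa [Measure.real] using h1

lemma setInt_Iic_split (ψ : ℝ → ℝ) (hm : Measurable ψ) (hb : ∀ t, ψ t ∈ Icc (0:ℝ) 1)
    {u t : ℝ} (h : u ≤ t) :
    ∫ x in Iic t, ψ x ∂μ01 = (∫ x in Iic u, ψ x ∂μ01) + ∫ x in Ioc u t, ψ x ∂μ01 := by
  rw [← Set.Iic_union_Ioc_eq_Iic h]
  exact setIntegral_union (Iic_disjoint_Ioc le_rfl) measurableSet_Ioc
    ((integrable_of_mem_Icc ψ hm hb).restrict) ((integrable_of_mem_Icc ψ hm hb).restrict)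

lemma measure_Ioc_le (u t : ℝ) (h : u ≤ t) : (μ01 (Ioc u t)).toReal ≤ t - u := by
  have : μ01 (Ioc u t) ≤ volume (Ioc u t) := by
    rw [Measure.restrict_apply measurableSet_Ioc]
    exact measure_mono inter_subset_left
  rw [Real.volume_Ioc] at this
  calc (μ01 (Ioc u t)).toReal ≤ (ENNReal.ofReal (t - u)).toReal :=
        ENNReal.toReal_mono ENNReal.ofReal_ne_top this
    _ ≤ t - u := by rw [ENNReal.toReal_ofReal (by linarith)]

lemma cdf_mem (ψ : ℝ → ℝ) (hm : Measurable ψ) (hb : ∀ t, ψ t ∈ Icc (0:ℝ) 1) (t : ℝ) :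
    ∫ x in Iic t, ψ x ∂μ01 ∈ Icc (0:ℝ) 1 := by
  constructor
  · exact setInt_nonneg ψ hb _
  · refine (setInt_le_measure ψ hm hb _).trans ?_
    have : μ01 (Iic t) ≤ μ01 univ := measure_mono (subset_univ _)
    have h2 : (μ01 univ) = 1 := by rw [Measure.restrict_apply_univ]; simp
    calc (μ01 (Iic t)).toReal ≤ (μ01 univ).toReal :=
          ENNReal.toReal_mono (by rw [h2]; exact ENNReal.one_ne_top) this
      _ = 1 := by rw [h2]; simp

lemma cdf_dist_le (ψ : ℝ → ℝ) (hm : Measurable ψ) (hb : ∀ t, ψ t ∈ Icc (0:ℝ) 1)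
    {u t : ℝ} (h : u ≤ t) :
    dist (∫ x in Iic t, ψ x ∂μ01) (∫ x in Iic u, ψ x ∂μ01) ≤ t - u := by
  rw [setInt_Iic_split ψ hm hb h, dist_eq_norm, add_sub_cancel_left, Real.norm_eq_abs,
    abs_of_nonneg (setInt_nonneg ψ hb _)]
  exact (setInt_le_measure ψ hm hb _).trans (measure_Ioc_le u t h)

lemma exists_subseq_cdf (ψ : ℕ → ℝ → ℝ) (hm : ∀ n, Measurable (ψ n))
    (hb : ∀ n t, ψ n t ∈ Icc (0:ℝ) 1) :
    ∃ σ : ℕ → ℕ, StrictMono σ ∧ ∃ F : ℝ → ℝ,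
      ∀ t, Tendsto (fun n => ∫ x in Iic t, ψ (σ n) x ∂μ01) atTop (𝓝 (F t)) := by
  set a : ℕ → ℝ → ℝ := fun n t => ∫ x in Iic t, ψ n x ∂μ01 with ha
  have hK : IsCompact (univ.pi fun _ : ℚ => Icc (0:ℝ) 1) :=
    isCompact_univ_pi fun _ => isCompact_Icc
  obtain ⟨L, -, σ, hσ, hconv⟩ := hK.isSeqCompact
    (x := fun n (q : ℚ) => a n (q : ℝ))
    (fun n => by intro q _; exact cdf_mem (ψ n) (hm n) (hb n) _)
  rw [tendsto_pi_nhds] at hconv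
  have hcau : ∀ t : ℝ, CauchySeq (fun n => a (σ n) t) := by
    intro t
    rw [Metric.cauchySeq_iff]
    intro ε hε
    obtain ⟨q, hq1, hq2⟩ := exists_rat_btwn (lt_add_of_pos_right t (by linarith : (0:ℝ) < ε/4))
    have hcq : CauchySeq (fun n => a (σ n) (q : ℝ)) := (hconv q).cauchySeq
    rw [Metric.cauchySeq_iff] at hcq
    obtain ⟨N, hN⟩ := hcq (ε/4) (by linarith)
    refine ⟨N, fun m hm' n hn' => ?_⟩
    have h1 : dist (a (σ m) t) (a (σ m) (q:ℝ)) ≤ (q:ℝ) - t := by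
      rw [dist_comm]; exact cdf_dist_le (ψ (σ m)) (hm _) (hb _) hq1.le
    have h2 : dist (a (σ n) t) (a (σ n) (q:ℝ)) ≤ (q:ℝ) - t := by
      rw [dist_comm]; exact cdf_dist_le (ψ (σ n)) (hm _) (hb _) hq1.le
    have h3 := hN m hm' n hn'
    have h2' : dist (a (σ n) (q:ℝ)) (a (σ n) t) ≤ (q:ℝ) - t := by rw [dist_comm]; exact h2
    have htri := dist_triangle4 (a (σ m) t) (a (σ m) (q:ℝ)) (a (σ n) (q:ℝ)) (a (σ n) t)
    linarith
  have : ∀ t : ℝ, ∃ l, Tendsto (fun n => a (σ n) t) atTop (𝓝 l) := fun t =>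
    cauchySeq_tendsto_of_complete (hcau t)
  choose F hF using this
  exact ⟨σ, hσ, F, hF⟩

lemma exists_density (F : ℝ → ℝ) (hmono : Monotone F)
    (hlip : ∀ u t : ℝ, u ≤ t → F t - F u ≤ t - u)
    (h0 : ∀ t : ℝ, t ≤ 0 → F t = 0) (h1 : ∀ t : ℝ, 1 ≤ t → F t = F 1) :
    ∃ φ : ℝ → ℝ, Measurable φ ∧ (∀ t, φ t ∈ Icc (0:ℝ) 1) ∧
      ∀ t : ℝ, ∫ x in Iic t, φ x ∂μ01 = F t := by
  have hFnonneg : ∀ t, 0 ≤ F t := by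
    intro t
    rcases le_total t 0 with h | h
    · rw [h0 t h]
    · rw [← h0 0 le_rfl]; exact hmono h
  have hcont : Continuous F := by
    have : LipschitzWith 1 F := by
      apply LipschitzWith.of_dist_le_mul
      intro u t
      rw [NNReal.coe_one, one_mul, Real.dist_eq, Real.dist_eq]
      rcases le_total u t with h | h
      · rw [abs_of_nonpos (by linarith [hmono h] : F u - F t ≤ 0),
          abs_of_nonpos (by linarith : u - t ≤ 0)]
        linarith [hlip u t h]
      · rw [abs_of_nonneg (by linarith [hmono h] : 0 ≤ F u - F t),
          abs_of_nonneg (by linarith : 0 ≤ u - t)]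
        linarith [hlip t u h]
    exact this.continuous
  set S : StieltjesFunction ℝ := ⟨F, hmono, fun x => hcont.continuousAt.continuousWithinAt⟩
  have hbot : Tendsto F atBot (𝓝 0) := by
    apply tendsto_const_nhds.congr'
    filter_upwards [eventually_le_atBot (0:ℝ)] with t ht
    exact (h0 t ht).symm
  have htop : Tendsto F atTop (𝓝 (F 1)) := by
    apply tendsto_const_nhds.congr'
    filter_upwards [eventually_ge_atTop (1:ℝ)] with t ht
    exact (h1 t ht).symm
  have hIic : ∀ t, S.measure (Iic t) = ENNReal.ofReal (F t) := by
    intro t; rw [S.measure_Iic hbot]; norm_num; rfl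
  set G : StieltjesFunction ℝ :=
    ⟨fun t => t - F t, fun u t h => by simpa using by linarith [hlip u t h],
      fun x => (continuous_id.sub hcont).continuousAt.continuousWithinAt⟩
  have hsum : S.measure + G.measure = volume := by
    refine (Measure.ext_of_Ioc volume (S.measure + G.measure) fun a b hab => ?_).symm
    rw [Measure.add_apply, S.measure_Ioc, G.measure_Ioc, Real.volume_Ioc]
    show ENNReal.ofReal (b - a) = ENNReal.ofReal (F b - F a) + ENNReal.ofReal ((b - F b) - (a - F a))
    rw [← ENNReal.ofReal_add (by linarith [hmono hab.le])
      (by linarith [hlip a b hab.le])]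
    congr 1; ring
  have hν_le : ∀ s : Set ℝ, S.measure s ≤ volume s := by
    intro s
    rw [← hsum, Measure.add_apply]
    exact le_self_add
  have hcompl : S.measure (Icc (0:ℝ) 1)ᶜ = 0 := by
    have hsub : (Icc (0:ℝ) 1)ᶜ ⊆ Iic 0 ∪ Ioi 1 := by
      intro x hx
      rw [mem_compl_iff, mem_Icc, not_and_or] at hx
      rcases hx with h | h
      · exact Or.inl (le_of_lt (not_le.1 h))
      · exact Or.inr (not_le.1 h)
    refine measure_mono_null hsub ?_
    refine measure_union_null ?_ ?_
    · rw [hIic 0, h0 0 le_rfl]; simp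
    · refine measure_mono_null Ioi_subset_Ici_self ?_
      rw [S.measure_Ici htop]
      have : Function.leftLim F 1 = F 1 :=
        leftLim_eq_of_tendsto (hcont.continuousAt.continuousWithinAt.tendsto)
      show ENNReal.ofReal (F 1 - Function.leftLim F 1) = 0
      rw [this]; simp
  have hle01 : S.measure ≤ μ01 := by
    refine Measure.le_iff.2 fun s hs => ?_
    have h1' : S.measure s ≤ S.measure (s ∩ Icc 0 1) + S.measure (s \ Icc 0 1) := by
      rw [← measure_union (disjoint_sdiff_right.mono_left inter_subset_right)
          (hs.diff measurableSet_Icc)]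
      exact measure_mono (by intro x hx; by_cases h : x ∈ Icc (0:ℝ) 1
                             · exact Or.inl ⟨hx, h⟩
                             · exact Or.inr ⟨hx, h⟩)
    have h2' : S.measure (s \ Icc 0 1) = 0 :=
      measure_mono_null (diff_subset_compl _ _) hcompl
    rw [h2', add_zero] at h1'
    refine h1'.trans ?_
    rw [Measure.restrict_apply hs]
    exact hν_le _
  haveI hfin : IsFiniteMeasure S.measure :=
    isFiniteMeasure_of_le μ01 hle01
  have hac : S.measure ≪ μ01 := Measure.absolutelyContinuous_of_le hle01
  set φ₀ := S.measure.rnDeriv μ01 with hφ₀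
  have h₀le : φ₀ ≤ᵐ[μ01] 1 := Measure.rnDeriv_le_one_of_le hle01
  have hwd : μ01.withDensity φ₀ = S.measure := Measure.withDensity_rnDeriv_eq _ _ hac
  refine ⟨fun t => min ((φ₀ t).toReal) 1,
    ((Measure.measurable_rnDeriv _ _).ennreal_toReal).min measurable_const,
    fun t => ⟨le_min ENNReal.toReal_nonneg zero_le_one, min_le_right _ _⟩, ?_⟩
  have haeq : (fun t => ENNReal.ofReal (min ((φ₀ t).toReal) 1)) =ᵐ[μ01] φ₀ := by
    filter_upwards [h₀le] with t ht
    have hne : φ₀ t ≠ ⊤ := (ht.trans_lt (by exact ENNReal.one_lt_top)).ne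
    have h2 : (φ₀ t).toReal ≤ 1 := by
      simpa using ENNReal.toReal_mono ENNReal.one_ne_top ht
    rw [min_eq_left h2, ENNReal.ofReal_toReal hne]
  intro t
  rw [integral_eq_lintegral_of_nonneg_ae
    (Eventually.of_forall fun x => le_min ENNReal.toReal_nonneg zero_le_one)
    ((((Measure.measurable_rnDeriv _ _).ennreal_toReal).min
      measurable_const).aestronglyMeasurable)]
  rw [lintegral_congr_ae (ae_restrict_of_ae haeq), ← withDensity_apply φ₀ measurableSet_Iic,
    hwd, hIic t, ENNReal.toReal_ofReal (hFnonneg t)]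

lemma tendsto_setIntegral_of_cdf (ψ : ℕ → ℝ → ℝ) (hm : ∀ n, Measurable (ψ n))
    (hb : ∀ n t, ψ n t ∈ Icc (0:ℝ) 1) (φ : ℝ → ℝ) (hmφ : Measurable φ)
    (hbφ : ∀ t, φ t ∈ Icc (0:ℝ) 1)
    (hF : ∀ t : ℝ, Tendsto (fun n => ∫ x in Iic t, ψ n x ∂μ01) atTop
      (𝓝 (∫ x in Iic t, φ x ∂μ01))) :
    ∀ ⦃A : Set ℝ⦄, MeasurableSet A →
      Tendsto (fun n => ∫ x in A, ψ n x ∂μ01) atTop (𝓝 (∫ x in A, φ x ∂μ01)) := by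
  have hint : ∀ n, Integrable (ψ n) μ01 := fun n => integrable_of_mem_Icc _ (hm n) (hb n)
  have hintφ : Integrable φ μ01 := integrable_of_mem_Icc _ hmφ hbφ
  have hres : μ01.restrict (Iic 1) = μ01 := by
    rw [Measure.restrict_restrict measurableSet_Iic,
      inter_eq_self_of_subset_right (Icc_subset_Iic_self)]
  have huniv : Tendsto (fun n => ∫ x, ψ n x ∂μ01) atTop (𝓝 (∫ x, φ x ∂μ01)) := by
    have := hF 1
    rw [show (∫ x in Iic 1, φ x ∂μ01) = ∫ x, φ x ∂μ01 by rw [hres]] at this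
    refine this.congr fun n => ?_
    rw [show (∫ x in Iic 1, ψ n x ∂μ01) = ∫ x, ψ n x ∂μ01 by rw [hres]]
  have hgen : (inferInstance : MeasurableSpace ℝ) =
      MeasurableSpace.generateFrom { S : Set ℝ | ∃ l u, l < u ∧ Ioc l u = S } := by
    rw [BorelSpace.measurable_eq (α := ℝ), borel_eq_generateFrom_Ioc ℝ]
  refine MeasurableSpace.induction_on_inter hgen ?_ ?_ ?_ ?_ ?_
  · rintro s ⟨a, b, hab, rfl⟩ t ⟨c, d, hcd, rfl⟩ hne
    rw [Set.Ioc_inter_Ioc] at hne ⊢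
    exact ⟨max a c, min b d, by
      rcases hne with ⟨x, hx⟩
      exact lt_of_lt_of_le hx.1 hx.2, rfl⟩
  · simp only [Measure.restrict_empty, integral_zero_measure]
    exact tendsto_const_nhds
  · rintro t ⟨a, b, hab, rfl⟩
    have hsplit : ∀ (f : ℝ → ℝ), Measurable f → (∀ t, f t ∈ Icc (0:ℝ) 1) →
        ∫ x in Ioc a b, f x ∂μ01 = (∫ x in Iic b, f x ∂μ01) - ∫ x in Iic a, f x ∂μ01 := by
      intro f hmf hbf
      rw [setInt_Iic_split f hmf hbf hab.le]; ring
    rw [hsplit φ hmφ hbφ]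
    refine ((hF b).sub (hF a)).congr fun n => ?_
    rw [hsplit (ψ n) (hm n) (hb n)]
  · intro t ht hC
    have h1 : ∀ (f : ℝ → ℝ), Integrable f μ01 →
        ∫ x in tᶜ, f x ∂μ01 = (∫ x, f x ∂μ01) - ∫ x in t, f x ∂μ01 := by
      intro f hf
      have := integral_add_compl ht hf
      linarith
    rw [h1 φ hintφ]
    refine (huniv.sub hC).congr fun n => ?_
    rw [h1 (ψ n) (hint n)]
  · intro f hdisj hmeasf hC
    set U := ⋃ i, f i with hU
    set Uk := fun k => ⋃ i ∈ Finset.range k, f i with hUk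
    have hUkm : ∀ k, MeasurableSet (Uk k) := fun k =>
      (Finset.range k).measurableSet_biUnion (fun i _ => hmeasf i)
    have hUm : MeasurableSet U := MeasurableSet.iUnion hmeasf
    have hUkU : ∀ k, Uk k ⊆ U := fun k => by
      intro x hx
      simp only [hUk, mem_iUnion, Finset.mem_range] at hx
      obtain ⟨i, _, hi⟩ := hx
      exact mem_iUnion.2 ⟨i, hi⟩
    set D := fun k => U \ Uk k with hD
    have hDm : ∀ k, MeasurableSet (D k) := fun k => hUm.diff (hUkm k)
    have hDanti : Antitone D := by
      intro k l hkl
      apply diff_subset_diff_right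
      intro x hx
      simp only [hUk, mem_iUnion, Finset.mem_range] at hx ⊢
      obtain ⟨i, hik, hi⟩ := hx
      exact ⟨i, lt_of_lt_of_le hik hkl, hi⟩
    have hDempty : ⋂ k, D k = ∅ := by
      ext x
      simp only [mem_iInter, mem_diff, mem_empty_iff_false, iff_false, not_forall]
      by_cases hx : x ∈ U
      · obtain ⟨i, hi⟩ := mem_iUnion.1 hx
        refine ⟨i + 1, fun h => h.2 ?_⟩
        simp only [hUk, mem_iUnion, Finset.mem_range]
        exact ⟨i, Nat.lt_succ_self i, hi⟩
      · exact ⟨0, fun h => hx h.1⟩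
    have hDlim : Tendsto (fun k => (μ01 (D k)).toReal) atTop (𝓝 0) := by
      have h1 : Tendsto (fun k => μ01 (D k)) atTop (𝓝 0) := by
        have := tendsto_measure_iInter_atTop (μ := μ01)
          (fun k => (hDm k).nullMeasurableSet) hDanti ⟨0, measure_ne_top _ _⟩
        rw [hDempty, measure_empty] at this
        exact this
      have h2 := (ENNReal.tendsto_toReal (by simp : (0:ENNReal) ≠ ⊤)).comp h1
      simpa [Function.comp_def] using h2
    have hsplitU : ∀ (h : ℝ → ℝ), Integrable h μ01 → ∀ k,
        ∫ x in U, h x ∂μ01 = (∫ x in Uk k, h x ∂μ01) + ∫ x in D k, h x ∂μ01 := by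
      intro h hh k
      rw [← setIntegral_union disjoint_sdiff_right (hDm k) hh.integrableOn hh.integrableOn,
        union_diff_cancel (hUkU k)]
    have hsum : ∀ k, Tendsto (fun n => ∫ x in Uk k, ψ n x ∂μ01) atTop
        (𝓝 (∫ x in Uk k, φ x ∂μ01)) := by
      intro k
      have heq : ∀ (h : ℝ → ℝ), Integrable h μ01 →
          ∫ x in Uk k, h x ∂μ01 = ∑ i ∈ Finset.range k, ∫ x in f i, h x ∂μ01 := by
        intro h hh
        exact integral_biUnion_finset (Finset.range k) (fun i _ => hmeasf i)
          (fun i _ j _ hij => hdisj hij) (fun i _ => hh.integrableOn)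
      rw [heq φ hintφ]
      have := tendsto_finset_sum (Finset.range k)
        (fun i (_ : i ∈ Finset.range k) => hC i)
      refine this.congr fun n => ?_
      rw [heq (ψ n) (hint n)]
    rw [Metric.tendsto_atTop]
    intro ε hε
    obtain ⟨k, hk⟩ := (Metric.tendsto_atTop.1 hDlim (ε/3) (by linarith)).imp
      (fun k h => h k le_rfl)
    rw [Real.dist_eq, sub_zero, abs_of_nonneg ENNReal.toReal_nonneg] at hk
    obtain ⟨N, hN⟩ := Metric.tendsto_atTop.1 (hsum k) (ε/3) (by linarith)
    refine ⟨N, fun n hn => ?_⟩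
    have hb1 : ∀ (h : ℝ → ℝ), Measurable h → (∀ t, h t ∈ Icc (0:ℝ) 1) →
        dist (∫ x in U, h x ∂μ01) (∫ x in Uk k, h x ∂μ01) ≤ (μ01 (D k)).toReal := by
      intro h hmh hbh
      rw [hsplitU h (integrable_of_mem_Icc h hmh hbh) k, dist_eq_norm, add_sub_cancel_left,
        Real.norm_eq_abs, abs_of_nonneg (setInt_nonneg h hbh _)]
      exact setInt_le_measure h hmh hbh _
    calc dist (∫ x in U, ψ n x ∂μ01) (∫ x in U, φ x ∂μ01)
        ≤ dist (∫ x in U, ψ n x ∂μ01) (∫ x in Uk k, ψ n x ∂μ01)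
          + dist (∫ x in Uk k, ψ n x ∂μ01) (∫ x in Uk k, φ x ∂μ01)
          + dist (∫ x in Uk k, φ x ∂μ01) (∫ x in U, φ x ∂μ01) := dist_triangle4 _ _ _ _
      _ < ε := by
          have e1 := hb1 (ψ n) (hm n) (hb n)
          have e2 := hN n hn
          have e3 := hb1 φ hmφ hbφ
          rw [dist_comm (∫ x in U, φ x ∂μ01)] at e3
          linarith

section VectorStep
variable {X : Type*} [NormedAddCommGroup X] [NormedSpace ℝ X] [CompleteSpace X]

set_option linter.unusedSectionVars false in
lemma integrable_smul01 (χ : ℝ → ℝ) (hmχ : Measurable χ) (hbχ : ∀ t, χ t ∈ Icc (0:ℝ) 1)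
    {f : ℝ → X} (hf : Integrable f μ01) : Integrable (fun t => χ t • f t) μ01 := by
  apply Integrable.mono' hf.norm (hmχ.aestronglyMeasurable.smul hf.aestronglyMeasurable)
  refine Eventually.of_forall fun t => ?_
  rw [show (χ • f) t = χ t • f t from rfl, norm_smul]
  calc ‖χ t‖ * ‖f t‖ ≤ 1 * ‖f t‖ := by
        apply mul_le_mul_of_nonneg_right _ (norm_nonneg _)
        rw [Real.norm_eq_abs, abs_le]
        exact ⟨by linarith [(hbχ t).1], (hbχ t).2⟩
    _ = ‖f t‖ := one_mul _

lemma smul_integral_dist_le (χ : ℝ → ℝ) (hmχ : Measurable χ) (hbχ : ∀ t, χ t ∈ Icc (0:ℝ) 1)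
    {f₁ f₂ : ℝ → X} (hf₁ : Integrable f₁ μ01) (hf₂ : Integrable f₂ μ01) :
    dist (∫ t, χ t • f₁ t ∂μ01) (∫ t, χ t • f₂ t ∂μ01) ≤ ∫ t, ‖f₁ t - f₂ t‖ ∂μ01 := by
  rw [dist_eq_norm, ← integral_sub (integrable_smul01 χ hmχ hbχ hf₁)
    (integrable_smul01 χ hmχ hbχ hf₂)]
  have heq : (fun t => χ t • f₁ t - χ t • f₂ t) = fun t => χ t • (f₁ t - f₂ t) := by
    funext t; rw [smul_sub]
  rw [heq]
  refine (norm_integral_le_integral_norm _).trans ?_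
  refine integral_mono ((integrable_smul01 χ hmχ hbχ (hf₁.sub hf₂)).norm) (hf₁.sub hf₂).norm
    fun t => ?_
  rw [norm_smul]
  calc ‖χ t‖ * ‖f₁ t - f₂ t‖ ≤ 1 * ‖f₁ t - f₂ t‖ := by
        apply mul_le_mul_of_nonneg_right _ (norm_nonneg _)
        rw [Real.norm_eq_abs, abs_le]
        exact ⟨by linarith [(hbχ t).1], (hbχ t).2⟩
    _ = ‖f₁ t - f₂ t‖ := one_mul _

lemma tendsto_smul_integral (ψ : ℕ → ℝ → ℝ) (hm : ∀ n, Measurable (ψ n))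
    (hb : ∀ n t, ψ n t ∈ Icc (0:ℝ) 1) (φ : ℝ → ℝ) (hmφ : Measurable φ)
    (hbφ : ∀ t, φ t ∈ Icc (0:ℝ) 1)
    (hset : ∀ ⦃A : Set ℝ⦄, MeasurableSet A →
      Tendsto (fun n => ∫ x in A, ψ n x ∂μ01) atTop (𝓝 (∫ x in A, φ x ∂μ01)))
    (g : ℝ → X) (hg : Integrable g μ01) :
    Tendsto (fun n => ∫ t, ψ n t • g t ∂μ01) atTop (𝓝 (∫ t, φ t • g t ∂μ01)) := by
  set P : (ℝ → X) → Prop := fun f =>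
    Tendsto (fun n => ∫ t, ψ n t • f t ∂μ01) atTop (𝓝 (∫ t, φ t • f t ∂μ01)) with hP
  have key : ∀ ⦃f : ℝ → X⦄, Integrable f μ01 → P f := by
    refine Integrable.induction P ?_ ?_ ?_ ?_
    · intro c s hs hμs
      have heq : ∀ (χ : ℝ → ℝ),
          (∫ t, χ t • s.indicator (fun _ => c) t ∂μ01) = (∫ t in s, χ t ∂μ01) • c := by
        intro χ
        have h1 : (fun t => χ t • s.indicator (fun _ => c) t)
            = s.indicator (fun t => χ t • c) := by
          funext t
          by_cases ht : t ∈ s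
          · simp [ht]
          · simp [ht]
        rw [h1, integral_indicator hs, integral_smul_const]
      simp only [hP]
      simp only [heq]
      exact (hset hs).smul_const c
    · intro f₁ f₂ _ hf₁ hf₂ hPf₁ hPf₂
      simp only [hP] at hPf₁ hPf₂ ⊢
      have heq : ∀ (χ : ℝ → ℝ), Measurable χ → (∀ t, χ t ∈ Icc (0:ℝ) 1) →
          (∫ t, χ t • (f₁ + f₂) t ∂μ01)
            = (∫ t, χ t • f₁ t ∂μ01) + ∫ t, χ t • f₂ t ∂μ01 := by
        intro χ hmχ hbχ
        rw [← integral_add (integrable_smul01 χ hmχ hbχ hf₁) (integrable_smul01 χ hmχ hbχ hf₂)]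
        congr 1
        funext t
        simp [smul_add]
      rw [heq φ hmφ hbφ]
      refine (hPf₁.add hPf₂).congr fun n => ?_
      rw [heq (ψ n) (hm n) (hb n)]
    · refine IsSeqClosed.isClosed ?_
      intro u f hu hlim
      simp only [Set.mem_setOf_eq, hP] at hu ⊢
      rw [Metric.tendsto_atTop]
      intro ε hε
      have hdist : Tendsto (fun k => dist (u k) f) atTop (𝓝 0) :=
        tendsto_iff_dist_tendsto_zero.1 hlim
      obtain ⟨k, hk⟩ := (Metric.tendsto_atTop.1 hdist (ε/3) (by linarith)).imp
        (fun k h => h k le_rfl)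
      rw [Real.dist_eq, sub_zero, abs_of_nonneg dist_nonneg] at hk
      have hdk : dist (u k) f = ∫ t, ‖(u k : ℝ → X) t - (f : ℝ → X) t‖ ∂μ01 := by
        rw [L1.dist_eq_integral_dist]
        congr 1
        funext t
        rw [dist_eq_norm]
      obtain ⟨N, hN⟩ := Metric.tendsto_atTop.1 (hu k) (ε/3) (by linarith)
      refine ⟨N, fun n hn => ?_⟩
      have e1 : dist (∫ t, ψ n t • (f : ℝ → X) t ∂μ01) (∫ t, ψ n t • (u k : ℝ → X) t ∂μ01)
          ≤ ε/3 := by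
        refine le_trans (smul_integral_dist_le (ψ n) (hm n) (hb n)
          (L1.integrable_coeFn f) (L1.integrable_coeFn (u k))) ?_
        refine le_of_lt (lt_of_le_of_lt ?_ hk)
        rw [hdk]
        refine le_of_eq ?_
        refine integral_congr_ae (Eventually.of_forall fun t => ?_)
        exact norm_sub_rev _ _
      have e3 : dist (∫ t, φ t • (u k : ℝ → X) t ∂μ01) (∫ t, φ t • (f : ℝ → X) t ∂μ01)
          ≤ ε/3 := by
        refine le_trans (smul_integral_dist_le φ hmφ hbφ
          (L1.integrable_coeFn (u k)) (L1.integrable_coeFn f)) ?_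
        rw [← hdk]
        exact hk.le
      have e2 := hN n hn
      calc dist (∫ t, ψ n t • (f : ℝ → X) t ∂μ01) (∫ t, φ t • (f : ℝ → X) t ∂μ01)
          ≤ dist (∫ t, ψ n t • (f : ℝ → X) t ∂μ01) (∫ t, ψ n t • (u k : ℝ → X) t ∂μ01)
            + dist (∫ t, ψ n t • (u k : ℝ → X) t ∂μ01) (∫ t, φ t • (u k : ℝ → X) t ∂μ01)
            + dist (∫ t, φ t • (u k : ℝ → X) t ∂μ01) (∫ t, φ t • (f : ℝ → X) t ∂μ01) :=
            dist_triangle4 _ _ _ _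
        _ < ε := by linarith
    · intro f₁ f₂ hae hint hPf₁
      simp only [hP] at hPf₁ ⊢
      have heq : ∀ (χ : ℝ → ℝ), (∫ t, χ t • f₁ t ∂μ01) = ∫ t, χ t • f₂ t ∂μ01 := fun χ =>
        integral_congr_ae (hae.mono fun t ht => by simp only [ht])
      rw [← heq φ]
      refine hPf₁.congr fun n => ?_
      rw [heq (ψ n)]
  exact key hg

end VectorStep

section Assembly
variable {X : Type*} [NormedAddCommGroup X] [NormedSpace ℝ X] [CompleteSpace X]

lemma exists_phi (g : ℝ → X) (hg : Integrable g μ01) (ψ : ℕ → ℝ → ℝ)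
    (hm : ∀ n, Measurable (ψ n)) (hb : ∀ n t, ψ n t ∈ Icc (0:ℝ) 1) (x : X)
    (hx : Tendsto (fun n => ∫ t, ψ n t • g t ∂μ01) atTop (𝓝 x)) :
    ∃ φ : ℝ → ℝ, Measurable φ ∧ (∀ t, φ t ∈ Icc (0:ℝ) 1) ∧ x = ∫ t, φ t • g t ∂μ01 := by
  obtain ⟨σ, hσ, F, hF⟩ := exists_subseq_cdf ψ hm hb
  have hz : ∀ (n : ℕ) (t : ℝ), t ≤ 0 → (∫ x in Iic t, ψ n x ∂μ01) = 0 := by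
    intro n t ht
    have h0 : μ01 (Iic t) = 0 := by
      rw [Measure.restrict_apply measurableSet_Iic]
      have hsub : Iic t ∩ Icc 0 1 ⊆ ({0} : Set ℝ) := by
        rintro y ⟨h1', h2'⟩
        simp only [mem_Iic] at h1'
        simp only [mem_singleton_iff]
        have := h2'.1
        linarith
      exact measure_mono_null hsub Real.volume_singleton
    rw [Measure.restrict_eq_zero.2 h0, integral_zero_measure]
  have ho : ∀ (n : ℕ) (t : ℝ), 1 ≤ t → (∫ x in Iic t, ψ n x ∂μ01)
      = ∫ x in Iic 1, ψ n x ∂μ01 := by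
    intro n t ht
    rw [setInt_Iic_split (ψ n) (hm n) (hb n) ht]
    have h0 : μ01 (Ioc 1 t) = 0 := by
      rw [Measure.restrict_apply measurableSet_Ioc]
      have hsub : Ioc 1 t ∩ Icc 0 1 ⊆ (∅ : Set ℝ) := fun y hy =>
        absurd hy.2.2 (not_le.2 hy.1.1)
      exact measure_mono_null hsub measure_empty
    rw [Measure.restrict_eq_zero.2 h0, integral_zero_measure, add_zero]
  have hmono : Monotone F := by
    intro u t hut
    refine le_of_tendsto_of_tendsto' (hF u) (hF t) fun n => ?_
    rw [setInt_Iic_split (ψ (σ n)) (hm _) (hb _) hut]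
    linarith [setInt_nonneg (ψ (σ n)) (hb _) (Ioc u t)]
  have hlip : ∀ u t : ℝ, u ≤ t → F t - F u ≤ t - u := by
    intro u t hut
    refine le_of_tendsto ((hF t).sub (hF u)) (Eventually.of_forall fun n => ?_)
    rw [setInt_Iic_split (ψ (σ n)) (hm _) (hb _) hut, add_sub_cancel_left]
    exact (setInt_le_measure (ψ (σ n)) (hm _) (hb _) _).trans (measure_Ioc_le u t hut)
  have h0F : ∀ t : ℝ, t ≤ 0 → F t = 0 := by
    intro t ht
    refine tendsto_nhds_unique (hF t) ?_
    simp only [hz _ t ht]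
    exact tendsto_const_nhds
  have h1F : ∀ t : ℝ, 1 ≤ t → F t = F 1 := by
    intro t ht
    refine tendsto_nhds_unique (hF t) ?_
    have := hF 1
    refine this.congr fun n => ?_
    rw [ho _ t ht]
  obtain ⟨φ, hmφ, hbφ, hkey⟩ := exists_density F hmono hlip h0F h1F
  have hF' : ∀ t : ℝ, Tendsto (fun n => ∫ x in Iic t, ψ (σ n) x ∂μ01) atTop
      (𝓝 (∫ x in Iic t, φ x ∂μ01)) := by
    intro t
    rw [hkey t]
    exact hF t
  have hset := tendsto_setIntegral_of_cdf (fun n => ψ (σ n)) (fun n => hm _)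
    (fun n => hb _) φ hmφ hbφ hF'
  have hvec := tendsto_smul_integral (fun n => ψ (σ n)) (fun n => hm _) (fun n => hb _)
    φ hmφ hbφ hset g hg
  have hsub : Tendsto (fun n => ∫ t, ψ (σ n) t • g t ∂μ01) atTop (𝓝 x) :=
    hx.comp hσ.tendsto_atTop
  exact ⟨φ, hmφ, hbφ, tendsto_nhds_unique hsub hvec⟩

end Assembly

section Easy
set_option linter.unusedSectionVars false
variable {X : Type*} [NormedAddCommGroup X] [NormedSpace ℝ X] [CompleteSpace X]

lemma ISG_easy (g : ℝ → X) (hg : Integrable g (volume.restrict (Icc (0:ℝ) 1)))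
    (φ : ℝ → ℝ) (hφ : Measurable φ) (hmem : ∀ t, φ t ∈ Icc (0:ℝ) 1) :
    Tendsto (fun n => ∫ t in Icc (0:ℝ) 1,
        (SimpleFunc.approxOn φ hφ (Icc (0:ℝ) 1) 0 (by simp) n) t • g t) atTop
      (𝓝 (∫ t in Icc (0:ℝ) 1, φ t • g t)) := by
  set μ := volume.restrict (Icc (0:ℝ) 1)
  set s := fun n => SimpleFunc.approxOn φ hφ (Icc (0:ℝ) 1) 0 (by simp) n
  have hs_mem : ∀ n t, s n t ∈ Icc (0:ℝ) 1 := fun n t =>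
    SimpleFunc.approxOn_mem hφ _ n t
  refine tendsto_integral_of_dominated_convergence (fun t => ‖g t‖) ?_ hg.norm ?_ ?_
  · intro n
    exact ((s n).measurable.aestronglyMeasurable).smul hg.aestronglyMeasurable
  · intro n
    refine Eventually.of_forall fun t => ?_
    rw [norm_smul]
    have h1 := (hs_mem n t).1; have h2 := (hs_mem n t).2
    calc ‖s n t‖ * ‖g t‖ ≤ 1 * ‖g t‖ := by
          apply mul_le_mul_of_nonneg_right _ (norm_nonneg _)
          rw [Real.norm_eq_abs, abs_le]; constructor <;> linarith
      _ = ‖g t‖ := one_mul _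
  · refine Eventually.of_forall fun t => ?_
    exact (SimpleFunc.tendsto_approxOn hφ _ (by
      rw [closure_eq_iff_isClosed.2 isClosed_Icc]; exact hmem t)).smul_const _
end Easy

/-- For a Bochner integrable `g : [0,1] → X`, the set
`{ ∫₀¹ φ(t) • g(t) dt : φ measurable, 0 ≤ φ ≤ 1 }` equals the norm closure of the
corresponding set where `φ` ranges over simple (finitely-valued measurable) functions with
values in `[0,1]`. -/
theorem ISG_eq_closure_simple {X : Type*} [NormedAddCommGroup X] [NormedSpace ℝ X]
    [CompleteSpace X] (g : ℝ → X)
    (hg : Integrable g (volume.restrict (Set.Icc (0 : ℝ) 1))) :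
    {x : X | ∃ φ : ℝ → ℝ, Measurable φ ∧ (∀ t, φ t ∈ Set.Icc (0 : ℝ) 1) ∧
        x = ∫ t in Set.Icc (0 : ℝ) 1, φ t • g t} =
      closure {x : X | ∃ s : SimpleFunc ℝ ℝ, (∀ t, s t ∈ Set.Icc (0 : ℝ) 1) ∧
        x = ∫ t in Set.Icc (0 : ℝ) 1, s t • g t} := by
  ext x
  simp only [Set.mem_setOf_eq]
  constructor
  · rintro ⟨φ, hmφ, hbφ, rfl⟩
    refine mem_closure_of_tendsto (ISG_easy g hg φ hmφ hbφ)
      (Eventually.of_forall fun n => ?_)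
    exact ⟨SimpleFunc.approxOn φ hmφ (Icc (0:ℝ) 1) 0 (by simp) n,
      fun t => SimpleFunc.approxOn_mem hmφ _ n t, rfl⟩
  · intro hx
    obtain ⟨y, hyS, hylim⟩ := mem_closure_iff_seq_limit.1 hx
    choose s hs1 hs2 using hyS
    have hx' : Tendsto (fun n => ∫ t, (s n) t • g t ∂μ01) atTop (𝓝 x) :=
      hylim.congr fun n => hs2 n
    obtain ⟨φ, h1, h2, h3⟩ := exists_phi g hg (fun n => ⇑(s n))
      (fun n => (s n).measurable) hs1 x hx'
    exact ⟨φ, h1, h2, h3⟩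
end
end

section
/- Let X be a real Banach space and let A, C be nonempty compact convex subsets of X. Then the Hausdorff distance between A and C equals the sup-norm distance of their support functions over the dual unit ball: d_H(A, C) = ⨆_{x* ∈ B_{X*}} | sSup(x* '' A) − sSup(x* '' C) |. (This is the isometry property of the Rådström support-function embedding i : ck(X) → ℓ∞(B_{X*}), i(A) = s(·, A): d_H(A,C) = ‖i(A) − i(C)‖_∞.) -/
open Metric

/-- Separation lemma: if `r < infDist a C` for closed convex `C`, there is a unit-ball
functional whose support gap exceeds `r`. -/
lemma key_sep {X : Type*} [NormedAddCommGroup X] [NormedSpace ℝ X]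
    (C : Set X) (hCc : IsClosed C) (hCne : C.Nonempty) (hCconv : Convex ℝ C)
    (a : X) (r : ℝ) (hr : 0 ≤ r) (hlt : r < Metric.infDist a C) :
    ∃ f : X →L[ℝ] ℝ, ‖f‖ ≤ 1 ∧ sSup (f '' C) + r < f a := by
  have hnotmem : a ∉ cthickening r C := by
    intro hmem
    have : infDist a C ≤ r := by
      have h1 : infEDist a C ≤ ENNReal.ofReal r :=
        (mem_cthickening_iff).1 hmem
      have := ENNReal.toReal_mono (by simp) h1
      simpa [Metric.infDist, ENNReal.toReal_ofReal hr] using this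
    linarith
  obtain ⟨f, u, hfu, hua⟩ :=
    geometric_hahn_banach_closed_point (hCconv.cthickening r) (isClosed_cthickening) hnotmem
  obtain ⟨c₀, hc₀⟩ := id hCne
  have hfc₀ : f c₀ < u := hfu c₀ (self_subset_cthickening C hc₀)
  have hf0 : f ≠ 0 := by
    rintro rfl
    simp at hfc₀ hua; linarith
  have hfnorm : 0 < ‖f‖ := norm_pos_iff.2 hf0
  -- key pointwise bound: ∀ c ∈ C, f c + r * ‖f‖ ≤ u
  have hbound : ∀ c ∈ C, f c + r * ‖f‖ ≤ u := by
    intro c hc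
    rcases eq_or_lt_of_le hr with hr0 | hr0
    · simpa [← hr0] using (hfu c (self_subset_cthickening C hc)).le
    · have hM : ‖f‖ ≤ (u - f c) / r := by
        apply f.opNorm_le_bound'
        · have : 0 < u - f c := by
            have := hfu c (self_subset_cthickening C hc); linarith
          positivity
        · intro x hx
          have hxpos : (0:ℝ) < ‖x‖ := lt_of_le_of_ne (norm_nonneg x) (Ne.symm hx)
          set v : X := ‖x‖⁻¹ • x with hv
          have hvmem : ∀ w : X, ‖w‖ ≤ 1 → f c + r * f w < u := by
            intro w hw
            have : c + r • w ∈ cthickening r C := by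
              apply mem_cthickening_of_dist_le _ c _ _ hc
              have : dist (c + r • w) c = r * ‖w‖ := by
                simp [dist_eq_norm, norm_smul, abs_of_nonneg hr]
              rw [this]
              nlinarith
            have := hfu _ this
            simpa [mul_comm] using this
          have hv1 : ‖v‖ ≤ 1 := by
            rw [hv, norm_smul, norm_inv, norm_norm, inv_mul_cancel₀ hxpos.ne']
          have hv2 : ‖-v‖ ≤ 1 := by simpa using hv1
          have h1 := hvmem v hv1
          have h2 := hvmem (-v) hv2
          have hub : ∀ w : X, ‖w‖ ≤ 1 → f w ≤ (u - f c) / r := by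
            intro w hw
            have := hvmem w hw
            exact le_of_lt ((lt_div_iff₀ hr0).2 (by nlinarith))
          have habs : |f v| ≤ (u - f c) / r := by
            have hb1 := hub v hv1
            have hb2 := hub (-v) hv2
            rw [map_neg] at hb2
            rw [abs_le]
            exact ⟨by linarith, hb1⟩
          have hfx : f x = ‖x‖ * f v := by
            rw [hv, map_smul]
            simp [smul_eq_mul]
            field_simp
          rw [Real.norm_eq_abs, hfx, abs_mul, abs_of_nonneg hxpos.le, mul_comm]
          exact mul_le_mul_of_nonneg_right habs hxpos.le
      have := (mul_le_mul_of_nonneg_left hM hr0.le)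
      rw [mul_div_cancel₀ _ hr0.ne'] at this
      linarith
  refine ⟨‖f‖⁻¹ • f, ?_, ?_⟩
  · apply ContinuousLinearMap.opNorm_le_bound _ zero_le_one
    intro x
    have hx : (‖f‖⁻¹ • f) x = ‖f‖⁻¹ * f x := rfl
    rw [hx, Real.norm_eq_abs, abs_mul, abs_of_nonneg (inv_nonneg.2 hfnorm.le), one_mul]
    calc ‖f‖⁻¹ * |f x| ≤ ‖f‖⁻¹ * (‖f‖ * ‖x‖) :=
          mul_le_mul_of_nonneg_left (f.le_opNorm x) (inv_nonneg.2 hfnorm.le)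
      _ = ‖x‖ := by field_simp
  · have hsup : sSup ((‖f‖⁻¹ • f) '' C) ≤ ‖f‖⁻¹ * u - r := by
      apply csSup_le (hCne.image _)
      rintro _ ⟨c, hc, rfl⟩
      have := hbound c hc
      have h2 : ‖f‖⁻¹ * (f c + r * ‖f‖) ≤ ‖f‖⁻¹ * u :=
        mul_le_mul_of_nonneg_left this (inv_nonneg.2 hfnorm.le)
      have : (‖f‖⁻¹ • f) c = ‖f‖⁻¹ * f c := rfl
      rw [this]
      have : ‖f‖⁻¹ * (f c + r * ‖f‖) = ‖f‖⁻¹ * f c + r := by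
        field_simp
      linarith
    have hga : ‖f‖⁻¹ * u < (‖f‖⁻¹ • f) a := by
      have : (‖f‖⁻¹ • f) a = ‖f‖⁻¹ * f a := rfl
      rw [this]
      exact mul_lt_mul_of_pos_left hua (inv_pos.2 hfnorm)
    linarith

/-- For nonempty compact convex subsets `A, C` of a real Banach space, the Hausdorff distance
between `A` and `C` equals the sup over the dual unit ball of the absolute difference of the
support functions (isometry of the Rådström embedding). -/
theorem hausdorffDist_eq_iSup_abs_sub_sSup {X : Type*} [NormedAddCommGroup X]
    [NormedSpace ℝ X] [CompleteSpace X] (A C : Set X)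
    (hA : IsCompact A) (hAne : A.Nonempty) (hAconv : Convex ℝ A)
    (hC : IsCompact C) (hCne : C.Nonempty) (hCconv : Convex ℝ C) :
    Metric.hausdorffDist A C =
      ⨆ f : Metric.closedBall (0 : X →L[ℝ] ℝ) 1,
        |sSup ((f : X →L[ℝ] ℝ) '' A) - sSup ((f : X →L[ℝ] ℝ) '' C)| := by
  have hfin : EMetric.hausdorffEdist A C ≠ ⊤ :=
    Metric.hausdorffEdist_ne_top_of_nonempty_of_bounded hAne hCne hA.isBounded hC.isBounded
  set dH := Metric.hausdorffDist A C with hdH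
  -- one-sided support bound
  have oneside : ∀ (A C : Set X), IsCompact A → A.Nonempty → IsCompact C → C.Nonempty →
      ∀ f : X →L[ℝ] ℝ, ‖f‖ ≤ 1 →
      sSup (f '' A) ≤ sSup (f '' C) + Metric.hausdorffDist A C := by
    intro A C hA hAne hC hCne f hf
    have hfin : EMetric.hausdorffEdist A C ≠ ⊤ :=
      Metric.hausdorffEdist_ne_top_of_nonempty_of_bounded hAne hCne hA.isBounded hC.isBounded
    apply csSup_le (hAne.image _)
    rintro _ ⟨x, hx, rfl⟩
    refine le_of_forall_pos_le_add ?_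
    intro ε hε
    obtain ⟨y, hy, hxy⟩ := Metric.exists_dist_lt_of_hausdorffDist_lt hx
      (lt_add_of_pos_right _ hε) hfin
    have h1 : f x - f y ≤ dist x y := by
      have := f.le_opNorm (x - y)
      have h2 : ‖f‖ * ‖x - y‖ ≤ 1 * ‖x - y‖ :=
        mul_le_mul_of_nonneg_right hf (norm_nonneg _)
      calc f x - f y = f (x - y) := by rw [map_sub]
        _ ≤ ‖f (x - y)‖ := le_abs_self _
        _ ≤ ‖f‖ * ‖x - y‖ := this
        _ ≤ ‖x - y‖ := by linarith
        _ = dist x y := (dist_eq_norm x y).symm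
    have h2 : f y ≤ sSup (f '' C) :=
      le_csSup (hC.image f.continuous).bddAbove ⟨y, hy, rfl⟩
    linarith
  -- each term is ≤ dH
  have hterm : ∀ f : Metric.closedBall (0 : X →L[ℝ] ℝ) 1,
      |sSup ((f : X →L[ℝ] ℝ) '' A) - sSup ((f : X →L[ℝ] ℝ) '' C)| ≤ dH := by
    rintro ⟨f, hf⟩
    rw [mem_closedBall_zero_iff] at hf
    rw [abs_sub_le_iff]
    constructor
    · have := oneside A C hA hAne hC hCne f hf; linarith
    · have := oneside C A hC hCne hA hAne f hf
      rw [Metric.hausdorffDist_comm] at this; linarith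
  have hne : Nonempty (Metric.closedBall (0 : X →L[ℝ] ℝ) 1) :=
    ⟨0, by simp⟩
  have hbdd : BddAbove (Set.range fun f : Metric.closedBall (0 : X →L[ℝ] ℝ) 1 =>
      |sSup ((f : X →L[ℝ] ℝ) '' A) - sSup ((f : X →L[ℝ] ℝ) '' C)|) :=
    ⟨dH, by rintro _ ⟨f, rfl⟩; exact hterm f⟩
  set S := ⨆ f : Metric.closedBall (0 : X →L[ℝ] ℝ) 1,
      |sSup ((f : X →L[ℝ] ℝ) '' A) - sSup ((f : X →L[ℝ] ℝ) '' C)| with hS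
  have hSnonneg : 0 ≤ S := Real.iSup_nonneg fun f => abs_nonneg _
  apply le_antisymm
  · -- dH ≤ S via infDist bound
    apply Metric.hausdorffDist_le_of_infDist hSnonneg
    · intro x hx
      by_contra h
      push_neg at h
      obtain ⟨f, hf1, hf2⟩ := key_sep C hC.isClosed hCne hCconv x S hSnonneg h
      have hxA : f x ≤ sSup (f '' A) :=
        le_csSup (hA.image f.continuous).bddAbove ⟨x, hx, rfl⟩
      have hle : |sSup (f '' A) - sSup (f '' C)| ≤ S :=
        le_ciSup hbdd (⟨f, mem_closedBall_zero_iff.2 hf1⟩ :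
          Metric.closedBall (0 : X →L[ℝ] ℝ) 1)
      have : sSup (f '' A) - sSup (f '' C) ≤ S := (le_abs_self _).trans hle
      linarith
    · intro x hx
      by_contra h
      push_neg at h
      obtain ⟨f, hf1, hf2⟩ := key_sep A hA.isClosed hAne hAconv x S hSnonneg h
      have hxC : f x ≤ sSup (f '' C) :=
        le_csSup (hC.image f.continuous).bddAbove ⟨x, hx, rfl⟩
      have hle : |sSup (f '' A) - sSup (f '' C)| ≤ S :=
        le_ciSup hbdd (⟨f, mem_closedBall_zero_iff.2 hf1⟩ :
          Metric.closedBall (0 : X →L[ℝ] ℝ) 1)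
      have : -(sSup (f '' A) - sSup (f '' C)) ≤ S := (neg_le_abs _).trans hle
      linarith
  · exact ciSup_le hterm
end
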